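/- arXiv:1803.06463 — 3 statements merged into one kernel-verified Lean document; each statement's English description precedes it below -/
import Mathlib

section
/- Let N ≥ 2 and M = (m_{i,j}) ∈ M(N,r). Then the minimal double coset representative d_M equals the column-by-column product d_M = (w_{2,1} w_{3,1} ⋯ w_{N,1})(w_{2,2} w_{3,2} ⋯ w_{N,2}) ⋯ (w_{2,N−1} w_{3,N−1} ⋯ w_{N,N−1}), and this expression is reduced; in particular, ℓ(d_M) = Σ_{i=1}^{N} Σ_{j=1}^{N} m_{i,j} · ( Σ_{k<i, l>j} m_{k,l} ). -/
open Equiv Finset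

/-- The simple transposition `s i = (i, i+1)` (1-based) in the symmetric group `W` on
`{1, …, r}`, realised as `Equiv.Perm (Fin r)`, where the point `x : Fin r` carries the
label `x.val + 1`.  For `i` outside the range `1 ≤ i < r` we set `s i = 1`. -/
def sT (r : ℕ) (i : ℕ) : Equiv.Perm (Fin r) :=
  if h : 1 ≤ i ∧ i < r then Equiv.swap ⟨i - 1, by omega⟩ ⟨i, h.2⟩ else 1

/-- The ascending product `s_a · s_{a+1} ⋯ s_{a+n-1}` (equal to `1` when `n = 0`);
the rightmost factor acts first. -/
def ascProd (r a n : ℕ) : Equiv.Perm (Fin r) :=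
  ((List.range n).map (fun t => sT r (a + t))).prod

/-- The descending product `s_b · s_{b-1} ⋯ s_{b-n+1}` (equal to `1` when `n = 0`);
the rightmost factor acts first. -/
def descProd (r b n : ℕ) : Equiv.Perm (Fin r) :=
  ((List.range n).map (fun t => sT r (b - t))).prod

/-- The Coxeter length `ℓ(w)`, i.e. the number of inversions of `w`. -/
def clen {r : ℕ} (w : Equiv.Perm (Fin r)) : ℕ :=
  (Finset.univ.filter (fun p : Fin r × Fin r => p.1 < p.2 ∧ w p.2 < w p.1)).card

/-- `ptil lam i` is the partial sum `λ̃_i = λ_1 + ⋯ + λ_i` (1-based `i`). -/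
def ptil {N : ℕ} (lam : Fin N → ℕ) (i : ℕ) : ℕ :=
  ∑ l : Fin N, if l.val + 1 ≤ i then lam l else 0

/-- The block `N_i^λ = {λ̃_{i-1}+1, …, λ̃_i}` (1-based `i`), as a set of points of `Fin r`
(the point `x` has label `x.val + 1`). -/
def blockSet (r : ℕ) {N : ℕ} (lam : Fin N → ℕ) (i : ℕ) : Finset (Fin r) :=
  Finset.univ.filter (fun x => ptil lam (i - 1) ≤ x.val ∧ x.val < ptil lam i)

/-- The index of the block of `λ` containing the point `x`. -/
def blockOf {r N : ℕ} (lam : Fin N → ℕ) (x : Fin r) : ℕ :=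
  ((Finset.range N).filter (fun i => ptil lam (i + 1) ≤ x.val)).card

/-- The Young subgroup `W_λ`: all permutations stabilizing each block `N_i^λ`. -/
def young (r : ℕ) {N : ℕ} (lam : Fin N → ℕ) : Subgroup (Equiv.Perm (Fin r)) where
  carrier := {w | ∀ x : Fin r, blockOf lam (w x) = blockOf lam x}
  one_mem' := by intro x; rfl
  mul_mem' := by
    intro a b ha hb x
    have h := (ha (b x)).trans (hb x)
    simpa [Equiv.Perm.mul_apply] using h
  inv_mem' := by
    intro a ha x
    have h := ha (a⁻¹ x)
    simpa using h.symm

/-- The double coset `W_λ d W_μ`, as a set of permutations. -/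
def dcoset (r : ℕ) {N : ℕ} (lam mu : Fin N → ℕ) (d : Equiv.Perm (Fin r)) :
    Set (Equiv.Perm (Fin r)) :=
  {w | ∃ x ∈ young r lam, ∃ y ∈ young r mu, w = x * d * y}

/-- `d ∈ 𝒟_{λμ}`: `d` has minimal length in its double coset `W_λ d W_μ`. -/
def isMinRep (r : ℕ) {N : ℕ} (lam mu : Fin N → ℕ) (d : Equiv.Perm (Fin r)) : Prop :=
  ∀ w ∈ dcoset r lam mu d, clen d ≤ clen w

/-- The composition `ro M` of row sums of a matrix. -/
def rowSums {N : ℕ} (M : Fin N → Fin N → ℕ) : Fin N → ℕ := fun i => ∑ j, M i j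

/-- The composition `co M` of column sums of a matrix. -/
def colSums {N : ℕ} (M : Fin N → Fin N → ℕ) : Fin N → ℕ := fun j => ∑ i, M i j

/-- `d` is the distinguished double coset representative `d_M` attached to the matrix `M`:
`d` is the minimal length element in its `(W_{ro M}, W_{co M})` double coset, and
`|N_i^{ro M} ∩ d(N_j^{co M})| = m_{i,j}` for all `i, j`. -/
def isDM (r : ℕ) {N : ℕ} (M : Fin N → Fin N → ℕ) (d : Equiv.Perm (Fin r)) : Prop :=
  isMinRep r (rowSums M) (colSums M) d ∧
    ∀ i j : Fin N,
      ((blockSet r (rowSums M) (i.val + 1)) ∩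
        (blockSet r (colSums M) (j.val + 1)).image d).card = M i j

/-- The `(i,j)` entry of `M` with 1-based indices (`0` outside the range). -/
def ent {N : ℕ} (M : Fin N → Fin N → ℕ) (i j : ℕ) : ℕ :=
  if h : 1 ≤ i ∧ i ≤ N ∧ 1 ≤ j ∧ j ≤ N then M ⟨i - 1, by omega⟩ ⟨j - 1, by omega⟩ else 0

/-- `μ̃_{j-1}` for `μ = co M`: the sum of the first `j - 1` column sums of `M`. -/
def colPS {N : ℕ} (M : Fin N → Fin N → ℕ) (j : ℕ) : ℕ :=
  ∑ p : Fin N × Fin N, if p.2.val + 1 < j then M p.1 p.2 else 0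

/-- `σ_{i,j} = μ̃_{j-1} + Σ_{k ≤ i, l ≥ j} m_{k,l}` (1-based `i, j`). -/
def sigmaS {N : ℕ} (M : Fin N → Fin N → ℕ) (i j : ℕ) : ℕ :=
  colPS M j + ∑ p : Fin N × Fin N, if p.1.val + 1 ≤ i ∧ j ≤ p.2.val + 1 then M p.1 p.2 else 0

/-- `m̃_{i,j} = μ̃_{j-1} + Σ_{h ≤ i} m_{h,j}` (1-based `i, j`): the partial sum of the
column-reading sequence of `M` up to the entry `(i, j)`. -/
def mtil {N : ℕ} (M : Fin N → Fin N → ℕ) (i j : ℕ) : ℕ :=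
  colPS M j + ∑ p : Fin N × Fin N, if p.1.val + 1 ≤ i ∧ p.2.val + 1 = j then M p.1 p.2 else 0

/-- The element `w_{i,j}` (1-based `i, j`):
`w_{i,j} = (s_{σ_{i-1,j}} ⋯ s_{m̃_{i-1,j}+1})(s_{σ_{i-1,j}+1} ⋯ s_{m̃_{i-1,j}+2}) ⋯
(s_{σ_{i-1,j}+m_{i,j}-1} ⋯ s_{m̃_{i,j}})`, with `w_{i,j} = 1` when `m_{i,j} = 0` or
`σ_{i-1,j} = m̃_{i-1,j}`. -/
def wE (r : ℕ) {N : ℕ} (M : Fin N → Fin N → ℕ) (i j : ℕ) : Equiv.Perm (Fin r) :=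
  ((List.range (ent M i j)).map
    (fun x => descProd r (sigmaS M (i - 1) j + x) (sigmaS M (i - 1) j - mtil M (i - 1) j))).prod

/-- The column product `w_{2,j} w_{3,j} ⋯ w_{N,j}`. -/
def colProd (r : ℕ) {N : ℕ} (M : Fin N → Fin N → ℕ) (j : ℕ) : Equiv.Perm (Fin r) :=
  ((List.range (N - 1)).map (fun t => wE r M (t + 2) j)).prod

/-- `Π_t`: the product of the first `t` column products
`(w_{2,1} ⋯ w_{N,1})(w_{2,2} ⋯ w_{N,2}) ⋯ (w_{2,t} ⋯ w_{N,t})`. -/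
def piProd (r : ℕ) {N : ℕ} (M : Fin N → Fin N → ℕ) (t : ℕ) : Equiv.Perm (Fin r) :=
  ((List.range t).map (fun c => colProd r M (c + 1))).prod

namespace SX

open Finset Equiv

/-! ### Generic counting lemmas -/

lemma idx_eq (t : ℕ → ℕ) (hm : Monotone t) {N i z : ℕ} (hiN : i < N)
    (h1 : t i ≤ z) (h2 : z < t (i + 1)) :
    ((Finset.range N).filter (fun k => t (k + 1) ≤ z)).card = i := by
  have hset : (Finset.range N).filter (fun k => t (k + 1) ≤ z) = Finset.range i := by
    ext k
    simp only [mem_filter, mem_range]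
    constructor
    · rintro ⟨hkN, hk⟩
      by_contra hc
      push_neg at hc
      exact absurd (le_trans (hm (by omega : i + 1 ≤ k + 1)) hk) (not_le.mpr h2)
    · intro hk
      exact ⟨by omega, le_trans (hm (by omega : k + 1 ≤ i)) h1⟩
  rw [hset, card_range]

lemma idx_ex (t : ℕ → ℕ) {N z : ℕ} (h0 : t 0 ≤ z) (hN : z < t N) :
    ∃ i, i < N ∧ t i ≤ z ∧ z < t (i + 1) := by
  induction N with
  | zero => omega
  | succ n ih =>
      by_cases h : t n ≤ z
      · exact ⟨n, by omega, h, hN⟩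
      · push_neg at h
        obtain ⟨i, h1, h2, h3⟩ := ih h
        exact ⟨i, by omega, h2, h3⟩

lemma card_interval {r : ℕ} (A B : ℕ) (hB : B ≤ r) :
    ((univ : Finset (Fin r)).filter (fun z => A ≤ z.val ∧ z.val < B)).card = B - A := by
  rw [← Nat.card_Ico A B]
  apply Finset.card_bij (fun z _ => z.val)
  · intro a ha
    simp only [mem_filter] at ha
    simp only [Finset.mem_Ico]
    exact ha.2
  · intro a _ b _ h
    exact Fin.ext h
  · intro b hb
    simp only [Finset.mem_Ico] at hb
    exact ⟨⟨b, lt_of_lt_of_le hb.2 hB⟩, by simp [hb.1, hb.2], rfl⟩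

lemma card_pair {r : ℕ} (P : Fin r → Fin r → Prop) [∀ x y, Decidable (P x y)] :
    ((univ : Finset (Fin r × Fin r)).filter (fun p => P p.1 p.2)).card
      = ∑ x : Fin r, ((univ : Finset (Fin r)).filter (fun y => P x y)).card := by
  rw [Finset.card_eq_sum_card_fiberwise
    (f := Prod.fst) (t := univ) (fun x _ => mem_univ _)]
  refine Finset.sum_congr rfl (fun x _ => ?_)
  apply Finset.card_bij (fun p _ => p.2)
  · intro p hp
    simp only [mem_filter, mem_univ, true_and] at hp ⊢
    rcases hp with ⟨h1, h2⟩
    subst h2; exact h1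
  · intro p hp q hq hpq
    simp only [mem_filter] at hp hq
    exact Prod.ext (hp.2.trans hq.2.symm) hpq
  · intro y hy
    simp only [mem_filter, mem_univ, true_and] at hy ⊢
    exact ⟨(x, y), ⟨hy, rfl⟩, rfl⟩

lemma card_cells {N r : ℕ} (M : Fin N → Fin N → ℕ) (R C : Fin r → ℕ)
    (hR : ∀ z, R z < N) (hC : ∀ z, C z < N)
    (hfib : ∀ k l : Fin N,
      ((univ : Finset (Fin r)).filter (fun z => R z = k.val ∧ C z = l.val)).card = M k l)
    (Q : ℕ → ℕ → Prop) [∀ k l, Decidable (Q k l)] :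
    ((univ : Finset (Fin r)).filter (fun z => Q (R z) (C z))).card
      = ∑ k : Fin N, ∑ l : Fin N, if Q k.val l.val then M k l else 0 := by
  rw [Finset.card_eq_sum_card_fiberwise
    (f := fun z => ((⟨R z, hR z⟩ : Fin N), (⟨C z, hC z⟩ : Fin N))) (t := univ)
    (fun x _ => mem_univ _), Fintype.sum_prod_type]
  refine Finset.sum_congr rfl (fun k _ => Finset.sum_congr rfl (fun l _ => ?_))
  set b : Fin N × Fin N := (k, l) with hb
  rw [Finset.filter_filter]
  by_cases hq : Q b.1.val b.2.val
  · rw [if_pos hq, ← hfib b.1 b.2]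
    refine congrArg Finset.card ?_
    apply Finset.filter_congr
    intro z _
    simp only [Prod.ext_iff, Fin.ext_iff]
    constructor
    · rintro ⟨_, h2, h3⟩; exact ⟨h2, h3⟩
    · rintro ⟨h2, h3⟩; exact ⟨by rwa [h2, h3], h2, h3⟩
  · rw [if_neg hq, Finset.card_eq_zero, Finset.filter_eq_empty_iff]
    intro z _
    rintro ⟨hz, hb⟩
    rw [Prod.ext_iff, Fin.ext_iff, Fin.ext_iff] at hb
    obtain ⟨h1, h2⟩ := hb
    simp only at h1 h2
    rw [h1, h2] at hz
    exact hq hz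

lemma sum_cells {N r : ℕ} (M : Fin N → Fin N → ℕ) (R C : Fin r → ℕ)
    (hR : ∀ z, R z < N) (hC : ∀ z, C z < N)
    (hfib : ∀ k l : Fin N,
      ((univ : Finset (Fin r)).filter (fun z => R z = k.val ∧ C z = l.val)).card = M k l)
    (g : ℕ → ℕ → ℕ) :
    ∑ z : Fin r, g (R z) (C z) = ∑ k : Fin N, ∑ l : Fin N, M k l * g k.val l.val := by
  rw [← Finset.sum_fiberwise_of_maps_to
    (g := fun z => ((⟨R z, hR z⟩ : Fin N), (⟨C z, hC z⟩ : Fin N))) (t := univ)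
    (fun x _ => mem_univ _), Fintype.sum_prod_type]
  refine Finset.sum_congr rfl (fun k _ => Finset.sum_congr rfl (fun l _ => ?_))
  set b : Fin N × Fin N := (k, l) with hb
  have hconst : ∀ z ∈ (univ : Finset (Fin r)).filter
      (fun z => ((⟨R z, hR z⟩ : Fin N), (⟨C z, hC z⟩ : Fin N)) = b),
      g (R z) (C z) = g b.1.val b.2.val := by
    intro z hz
    simp only [mem_filter, Prod.ext_iff, Fin.ext_iff] at hz
    rw [hz.2.1, hz.2.2]
  rw [Finset.sum_congr rfl hconst, Finset.sum_const, smul_eq_mul, ← hfib b.1 b.2]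
  congr 1
  refine congrArg Finset.card ?_
  apply Finset.filter_congr
  intro z _
  simp only [Prod.ext_iff, Fin.ext_iff]

/-! ### Partial sums -/

lemma ptil_mono {N : ℕ} (lam : Fin N → ℕ) : Monotone (ptil lam) := by
  intro i j hij
  apply Finset.sum_le_sum
  intro l _
  by_cases h : l.val + 1 ≤ i
  · rw [if_pos h, if_pos (le_trans h hij)]
  · rw [if_neg h]
    exact Nat.zero_le _

lemma ptil_zero {N : ℕ} (lam : Fin N → ℕ) : ptil lam 0 = 0 := by
  apply Finset.sum_eq_zero
  intro l _
  rw [if_neg (by omega)]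

lemma ptil_N {N : ℕ} (lam : Fin N → ℕ) : ptil lam N = ∑ l, lam l := by
  apply Finset.sum_congr rfl
  intro l _
  rw [if_pos (by omega)]

lemma mtil_mono {N : ℕ} (M : Fin N → Fin N → ℕ) (j : ℕ) :
    Monotone (fun i => mtil M i j) := by
  intro i i' hii
  apply Nat.add_le_add_left
  apply Finset.sum_le_sum
  intro p _
  by_cases h : p.1.val + 1 ≤ i ∧ p.2.val + 1 = j
  · rw [if_pos h, if_pos ⟨le_trans h.1 hii, h.2⟩]
  · rw [if_neg h]
    exact Nat.zero_le _

lemma mtil_zero {N : ℕ} (M : Fin N → Fin N → ℕ) (j : ℕ) :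
    mtil M 0 j = colPS M j := by
  have : (∑ p : Fin N × Fin N, if p.1.val + 1 ≤ 0 ∧ p.2.val + 1 = j then M p.1 p.2 else 0) = 0 := by
    apply Finset.sum_eq_zero
    intro p _
    rw [if_neg (by omega)]
  rw [mtil, this, add_zero]

lemma colPS_eq {N : ℕ} (M : Fin N → Fin N → ℕ) (j : ℕ) :
    colPS M (j + 1) = ptil (colSums M) j := by
  rw [colPS, Fintype.sum_prod_type, Finset.sum_comm, ptil]
  apply Finset.sum_congr rfl
  intro l _
  dsimp only
  by_cases h : l.val + 1 ≤ j
  · rw [if_pos h, colSums]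
    apply Finset.sum_congr rfl
    intro i _
    rw [if_pos (by omega)]
  · rw [if_neg h]
    apply Finset.sum_eq_zero
    intro i _
    rw [if_neg (by omega)]

lemma mtil_top {N : ℕ} (M : Fin N → Fin N → ℕ) (j : ℕ) :
    mtil M N (j + 1) = ptil (colSums M) (j + 1) := by
  have this : ∀ p : Fin N × Fin N,
      (if p.2.val + 1 < j + 1 + 1 then M p.1 p.2 else 0)
        = (if p.2.val + 1 < j + 1 then M p.1 p.2 else 0)
          + (if p.1.val + 1 ≤ N ∧ p.2.val + 1 = j + 1 then M p.1 p.2 else 0) := by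
    rintro ⟨pi, pj⟩
    have hlt := pi.isLt
    dsimp only
    split_ifs <;> omega
  have h2 : colPS M (j + 1 + 1) = colPS M (j + 1)
      + ∑ p : Fin N × Fin N, if p.1.val + 1 ≤ N ∧ p.2.val + 1 = j + 1 then M p.1 p.2 else 0 := by
    rw [colPS, Finset.sum_congr rfl (fun p _ => this p), Finset.sum_add_distrib]
    rfl
  rw [mtil, ← colPS_eq M (j + 1), h2]

lemma mtil_succ {N : ℕ} (M : Fin N → Fin N → ℕ) {i j : ℕ} (hi : i < N) (hj : j < N) :
    mtil M (i + 1) (j + 1) = mtil M i (j + 1) + M ⟨i, hi⟩ ⟨j, hj⟩ := by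
  have hsplit : ∀ p : Fin N × Fin N,
      (if p.1.val + 1 ≤ i + 1 ∧ p.2.val + 1 = j + 1 then M p.1 p.2 else 0)
        = (if p.1.val + 1 ≤ i ∧ p.2.val + 1 = j + 1 then M p.1 p.2 else 0)
          + (if p.1.val = i ∧ p.2.val = j then M p.1 p.2 else 0) := by
    rintro ⟨pi, pj⟩
    dsimp only
    split_ifs <;> omega
  rw [mtil, mtil, add_assoc]
  congr 1
  rw [Finset.sum_congr rfl (fun p _ => hsplit p), Finset.sum_add_distrib]
  congr 1
  have hconv : ∀ p : Fin N × Fin N,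
      (if p.1.val = i ∧ p.2.val = j then M p.1 p.2 else 0)
        = (if p = ((⟨i, hi⟩, ⟨j, hj⟩) : Fin N × Fin N) then M p.1 p.2 else 0) := by
    rintro ⟨pi, pj⟩
    dsimp only
    by_cases h : pi.val = i ∧ pj.val = j
    · rw [if_pos h, if_pos (Prod.ext (Fin.ext h.1) (Fin.ext h.2))]
    · rw [if_neg h, if_neg (by
        intro hp
        rw [Prod.mk.injEq] at hp
        exact h ⟨by rw [hp.1], by rw [hp.2]⟩)]
  rw [Finset.sum_congr rfl (fun p _ => hconv p), Finset.sum_ite_eq' univ, if_pos (mem_univ _)]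

lemma sigma_decomp {N : ℕ} (M : Fin N → Fin N → ℕ) (i j : ℕ) :
    sigmaS M i (j + 1) = mtil M i (j + 1)
      + ∑ p : Fin N × Fin N, if p.1.val < i ∧ j < p.2.val then M p.1 p.2 else 0 := by
  rw [sigmaS, mtil, add_assoc]
  congr 1
  have hsplit : ∀ p : Fin N × Fin N,
      (if p.1.val + 1 ≤ i ∧ j + 1 ≤ p.2.val + 1 then M p.1 p.2 else 0)
        = (if p.1.val + 1 ≤ i ∧ p.2.val + 1 = j + 1 then M p.1 p.2 else 0)
          + (if p.1.val < i ∧ j < p.2.val then M p.1 p.2 else 0) := by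
    rintro ⟨pi, pj⟩
    dsimp only
    split_ifs <;> omega
  rw [Finset.sum_congr rfl (fun p _ => hsplit p), Finset.sum_add_distrib]

/-! ### Coordinates -/

def colBN {N : ℕ} (M : Fin N → Fin N → ℕ) (a : ℕ) : ℕ :=
  ((Finset.range N).filter (fun i => ptil (colSums M) (i + 1) ≤ a)).card

def cellRowN {N : ℕ} (M : Fin N → Fin N → ℕ) (a : ℕ) : ℕ :=
  ((Finset.range N).filter (fun i => mtil M (i + 1) (colBN M a + 1) ≤ a)).card

def KN {N : ℕ} (M : Fin N → Fin N → ℕ) (r a : ℕ) : ℕ :=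
  (cellRowN M a * N + colBN M a) * r + a

lemma blockOf_colB {N r : ℕ} (M : Fin N → Fin N → ℕ) (x : Fin r) :
    blockOf (colSums M) x = colBN M x.val := rfl

structure Coords {N : ℕ} (M : Fin N → Fin N → ℕ) (a : ℕ) : Prop where
  colB_lt : colBN M a < N
  colB_le : ptil (colSums M) (colBN M a) ≤ a
  lt_colB : a < ptil (colSums M) (colBN M a + 1)
  cellR_lt : cellRowN M a < N
  cellR_le : mtil M (cellRowN M a) (colBN M a + 1) ≤ a
  lt_cellR : a < mtil M (cellRowN M a + 1) (colBN M a + 1)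

lemma coords {N r : ℕ} (M : Fin N → Fin N → ℕ) (hc : ptil (colSums M) N = r)
    {a : ℕ} (ha : a < r) : Coords M a := by
  have h0 : ptil (colSums M) 0 ≤ a := by rw [ptil_zero]; omega
  have hN : a < ptil (colSums M) N := by omega
  obtain ⟨j, hjN, hj1, hj2⟩ := idx_ex (ptil (colSums M)) h0 hN
  have hcb : colBN M a = j := idx_eq _ (ptil_mono _) hjN hj1 hj2
  have h0' : mtil M 0 (j + 1) ≤ a := by rw [mtil_zero, colPS_eq]; exact hj1
  have hN' : a < mtil M N (j + 1) := by rw [mtil_top]; exact hj2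
  obtain ⟨i, hiN, hi1, hi2⟩ := idx_ex (fun i => mtil M i (j + 1)) h0' hN'
  have hcr : cellRowN M a = i := by
    rw [cellRowN, hcb]
    exact idx_eq _ (mtil_mono M _) hiN hi1 hi2
  refine ⟨by omega, by rw [hcb]; exact hj1, by rw [hcb]; exact hj2, by omega, ?_, ?_⟩
  · rw [hcb, hcr]; exact hi1
  · rw [hcb, hcr]; exact hi2

lemma colB_mono {N : ℕ} (M : Fin N → Fin N → ℕ) {a a' : ℕ} (h : a ≤ a') :
    colBN M a ≤ colBN M a' := by
  apply Finset.card_le_card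
  intro i hi
  simp only [mem_filter, mem_range] at hi ⊢
  exact ⟨hi.1, le_trans hi.2 h⟩

lemma cellRow_mono {N : ℕ} (M : Fin N → Fin N → ℕ) {a a' : ℕ} (h : a ≤ a')
    (hcol : colBN M a = colBN M a') : cellRowN M a ≤ cellRowN M a' := by
  rw [cellRowN, cellRowN, ← hcol]
  apply Finset.card_le_card
  intro i hi
  simp only [mem_filter, mem_range] at hi ⊢
  exact ⟨hi.1, le_trans hi.2 h⟩

lemma colB_eq {N : ℕ} (M : Fin N → Fin N → ℕ) {a j : ℕ} (hj : j < N)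
    (h1 : ptil (colSums M) j ≤ a) (h2 : a < ptil (colSums M) (j + 1)) :
    colBN M a = j := idx_eq _ (ptil_mono _) hj h1 h2

lemma cellRow_eq {N : ℕ} (M : Fin N → Fin N → ℕ) {a i j : ℕ} (hcb : colBN M a = j)
    (hi : i < N) (h1 : mtil M i (j + 1) ≤ a) (h2 : a < mtil M (i + 1) (j + 1)) :
    cellRowN M a = i := by
  rw [cellRowN, hcb]
  exact idx_eq _ (mtil_mono M _) hi h1 h2

lemma keylex {N r : ℕ} {c1 b1 v1 c2 b2 v2 : ℕ} (hb1 : b1 < N) (hv1 : v1 < r)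
    (hb2 : b2 < N) (hv2 : v2 < r) :
    (c1 * N + b1) * r + v1 < (c2 * N + b2) * r + v2
      ↔ (c1 < c2 ∨ (c1 = c2 ∧ (b1 < b2 ∨ (b1 = b2 ∧ v1 < v2)))) := by
  have key : ∀ c b v c' b' v' : ℕ, b < N → v < r →
      (c < c' ∨ (c = c' ∧ (b < b' ∨ (b = b' ∧ v < v')))) →
      (c * N + b) * r + v < (c' * N + b') * r + v' := by
    intro c b v c' b' v' hb hv h
    have hbase : c * N + b < c' * N + b' ∨ (c * N + b = c' * N + b' ∧ v < v') := by
      rcases h with h | ⟨rfl, h | ⟨rfl, h⟩⟩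
      · left
        calc c * N + b < c * N + N := by omega
        _ = (c + 1) * N := by ring
        _ ≤ c' * N := Nat.mul_le_mul_right N (by omega)
        _ ≤ c' * N + b' := Nat.le_add_right _ _
      · left; omega
      · right; exact ⟨rfl, h⟩
    rcases hbase with h | ⟨he, h⟩
    · calc (c * N + b) * r + v < (c * N + b) * r + r := by omega
      _ = (c * N + b + 1) * r := by ring
      _ ≤ (c' * N + b') * r := Nat.mul_le_mul_right r (by omega)
      _ ≤ (c' * N + b') * r + v' := Nat.le_add_right _ _
    · rw [he]; omega
  constructor
  · intro h
    rcases lt_trichotomy c1 c2 with h1 | h1 | h1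
    · left; exact h1
    · rcases lt_trichotomy b1 b2 with h2 | h2 | h2
      · exact Or.inr ⟨h1, Or.inl h2⟩
      · rcases lt_trichotomy v1 v2 with h3 | h3 | h3
        · exact Or.inr ⟨h1, Or.inr ⟨h2, h3⟩⟩
        · rw [h1, h2, h3] at h; omega
        · exact absurd (key c2 b2 v2 c1 b1 v1 hb2 hv2 (Or.inr ⟨h1.symm, Or.inr ⟨h2.symm, h3⟩⟩))
            (by omega)
      · exact absurd (key c2 b2 v2 c1 b1 v1 hb2 hv2 (Or.inr ⟨h1.symm, Or.inl h2⟩)) (by omega)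
    · exact absurd (key c2 b2 v2 c1 b1 v1 hb2 hv2 (Or.inl h1)) (by omega)
  · exact key c1 b1 v1 c2 b2 v2 hb1 hv1

lemma KN_lt_iff {N r : ℕ} (M : Fin N → Fin N → ℕ) (hc : ptil (colSums M) N = r)
    {a a' : ℕ} (ha : a < r) (ha' : a' < r) :
    KN M r a < KN M r a'
      ↔ (cellRowN M a < cellRowN M a'
          ∨ (cellRowN M a = cellRowN M a'
             ∧ (colBN M a < colBN M a' ∨ (colBN M a = colBN M a' ∧ a < a')))) := by
  have c1 := coords M hc ha
  have c2 := coords M hc ha'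
  exact keylex c1.colB_lt ha c2.colB_lt ha'

/-! ### The permutation `f` -/

def rankf {N : ℕ} (M : Fin N → Fin N → ℕ) (r : ℕ) (z : Fin r) : ℕ :=
  ((univ : Finset (Fin r)).filter (fun y => KN M r y.val < KN M r z.val)).card

lemma KN_inj {N : ℕ} (M : Fin N → Fin N → ℕ) (r : ℕ) {a a' : ℕ} (ha : a < r) (ha' : a' < r)
    (h : KN M r a = KN M r a') : a = a' := by
  have e1 : KN M r a % r = a % r := by rw [KN, Nat.add_comm, Nat.add_mul_mod_self_right]
  have e2 : KN M r a' % r = a' % r := by rw [KN, Nat.add_comm, Nat.add_mul_mod_self_right]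
  have h1 : a % r = a' % r := by rw [← e1, ← e2, h]
  rw [Nat.mod_eq_of_lt ha, Nat.mod_eq_of_lt ha'] at h1
  exact h1

lemma rankf_lt_of_KN {N : ℕ} (M : Fin N → Fin N → ℕ) {r : ℕ} {u v : Fin r}
    (h : KN M r u.val < KN M r v.val) : rankf M r u < rankf M r v := by
  apply Finset.card_lt_card
  rw [Finset.ssubset_iff_of_subset]
  · exact ⟨u, mem_filter.mpr ⟨mem_univ _, h⟩, by simp⟩
  · intro y hy
    simp only [mem_filter, mem_univ, true_and] at hy ⊢
    omega

lemma rankf_lt_iff {N : ℕ} (M : Fin N → Fin N → ℕ) {r : ℕ} (u v : Fin r) :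
    rankf M r u < rankf M r v ↔ KN M r u.val < KN M r v.val := by
  constructor
  · intro h
    rcases lt_trichotomy (KN M r u.val) (KN M r v.val) with h1 | h1 | h1
    · exact h1
    · have : u = v := Fin.ext (KN_inj M r u.isLt v.isLt h1)
      rw [this] at h; omega
    · exact absurd (rankf_lt_of_KN M h1) (by omega)
  · exact rankf_lt_of_KN M

lemma rankf_lt {N : ℕ} (M : Fin N → Fin N → ℕ) {r : ℕ} (z : Fin r) : rankf M r z < r := by
  have : rankf M r z < (univ : Finset (Fin r)).card := by
    apply Finset.card_lt_card
    rw [Finset.ssubset_iff_of_subset (Finset.subset_univ _)]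
    exact ⟨z, mem_univ _, by simp⟩
  simpa using this

noncomputable def fperm {N : ℕ} (M : Fin N → Fin N → ℕ) (r : ℕ) : Equiv.Perm (Fin r) :=
  Equiv.ofBijective (fun z => ⟨rankf M r z, rankf_lt M z⟩)
    (Finite.injective_iff_bijective.mp (by
      intro u v huv
      have h : rankf M r u = rankf M r v := by
        have := congrArg Fin.val huv
        simpa using this
      by_contra hne
      rcases lt_trichotomy (KN M r u.val) (KN M r v.val) with h1 | h1 | h1
      · exact absurd (rankf_lt_of_KN M h1) (by omega)
      · exact hne (Fin.ext (KN_inj M r u.isLt v.isLt h1))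
      · exact absurd (rankf_lt_of_KN M h1) (by omega)))

lemma fperm_val {N : ℕ} (M : Fin N → Fin N → ℕ) {r : ℕ} (z : Fin r) :
    (fperm M r z).val = rankf M r z := rfl

lemma fperm_lt_iff {N : ℕ} (M : Fin N → Fin N → ℕ) {r : ℕ} (u v : Fin r) :
    fperm M r u < fperm M r v ↔ KN M r u.val < KN M r v.val := by
  rw [Fin.lt_def, fperm_val, fperm_val]
  exact rankf_lt_iff M u v

/-! ### Action of `descProd` -/

lemma sT_apply {r : ℕ} (i : ℕ) (h1 : 1 ≤ i) (h2 : i < r) (x : Fin r) :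
    (sT r i) x = if x.val = i - 1 then ⟨i, h2⟩ else if x.val = i then ⟨i - 1, by omega⟩ else x := by
  rw [sT, dif_pos ⟨h1, h2⟩]
  by_cases hx1 : x.val = i - 1
  · have hx : x = ⟨i - 1, by omega⟩ := Fin.ext hx1
    rw [if_pos hx1, hx, Equiv.swap_apply_left]
  · by_cases hx2 : x.val = i
    · have hx : x = ⟨i, h2⟩ := Fin.ext hx2
      rw [if_neg hx1, if_pos hx2, hx, Equiv.swap_apply_right]
    · rw [if_neg hx1, if_neg hx2]
      exact Equiv.swap_apply_of_ne_of_ne (Fin.ne_of_val_ne hx1) (Fin.ne_of_val_ne hx2)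

lemma descProd_succ (r b n : ℕ) : descProd r b (n + 1) = sT r b * descProd r (b - 1) n := by
  rw [descProd, List.range_succ_eq_map, List.map_cons, List.prod_cons, List.map_map, Nat.sub_zero]
  congr 1
  rw [descProd]
  congr 1
  apply List.map_congr_left
  intro t _
  simp only [Function.comp_apply]
  congr 1
  omega

lemma descProd_apply {r : ℕ} (a n : ℕ) (hb : a + n < r) (x : Fin r) :
    (descProd r (a + n) n) x =
      if x.val < a ∨ a + n < x.val then x
      else if x.val = a then ⟨a + n, hb⟩ else ⟨x.val - 1, by omega⟩ := by
  induction n with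
  | zero =>
      have h0 : descProd r (a + 0) 0 = 1 := rfl
      rw [h0, Equiv.Perm.one_apply]
      by_cases h1 : x.val < a ∨ a + 0 < x.val
      · rw [if_pos h1]
      · rw [if_neg h1, if_pos (show x.val = a by omega)]
        exact Fin.ext (show x.val = a + 0 by omega)
  | succ n ih =>
      have hb' : a + n < r := by omega
      have hd : descProd r (a + (n + 1)) (n + 1) = sT r (a + n + 1) * descProd r (a + n) n := by
        rw [show a + (n + 1) = (a + n) + 1 from rfl, descProd_succ,
          show (a + n) + 1 - 1 = a + n from rfl]
      rw [hd, Equiv.Perm.mul_apply, ih hb', sT_apply (a + n + 1) (by omega) (by omega)]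
      apply Fin.ext
      have hxv := x.isLt
      simp only [apply_ite Fin.val]
      split_ifs <;> omega

/-! ### The invariant -/

def Pinv {N : ℕ} (M : Fin N → Fin N → ℕ) {r : ℕ} (w : Equiv.Perm (Fin r)) (a : ℕ) : Prop :=
  (∀ x : Fin r, x.val < a → w x = fperm M r x) ∧
  (∀ x y : Fin r, a ≤ x.val → x < y → w x < w y)

def nvalN {N : ℕ} (M : Fin N → Fin N → ℕ) (r a : ℕ) : ℕ :=
  ((univ : Finset (Fin r)).filter (fun y => a ≤ y.val ∧ KN M r y.val < KN M r a)).card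

lemma Pinv_zero {N : ℕ} (M : Fin N → Fin N → ℕ) {r : ℕ} : Pinv M (1 : Equiv.Perm (Fin r)) 0 :=
  ⟨fun x hx => absurd hx (by omega), fun x y _ hxy => by simpa using hxy⟩

lemma Pinv_step {N : ℕ} (M : Fin N → Fin N → ℕ) {r : ℕ} {w : Equiv.Perm (Fin r)} {a : ℕ}
    (ha : a < r) (hP : Pinv M w a) :
    Pinv M (w * descProd r (a + nvalN M r a) (nvalN M r a)) (a + 1) := by
  set A : Fin r := ⟨a, ha⟩ with hA
  set v : Fin r := w⁻¹ (fperm M r A) with hv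
  have hwv : w v = fperm M r A := by rw [hv]; simp
  have hva : a ≤ v.val := by
    by_contra hc
    push_neg at hc
    have h1 : w v = fperm M r v := hP.1 v hc
    have h2 : fperm M r v = fperm M r A := by rw [← h1, hwv]
    have : v = A := (fperm M r).injective h2
    rw [this] at hc
    exact absurd hc (by simp [hA])
  -- v.val = a + nvalN M r a
  have hcard : v.val = a + nvalN M r a := by
    have hbij : ((univ : Finset (Fin r)).filter (fun z => a ≤ z.val ∧ z.val < v.val)).card
        = nvalN M r a := by
      rw [nvalN]
      apply Finset.card_bij (fun z _ => (fperm M r)⁻¹ (w z))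
      · intro z hz
        simp only [mem_filter, mem_univ, true_and] at hz ⊢
        set y : Fin r := (fperm M r)⁻¹ (w z) with hy
        have hfy : fperm M r y = w z := by rw [hy]; simp
        have hay : a ≤ y.val := by
          by_contra hc
          push_neg at hc
          have : w y = fperm M r y := hP.1 y hc
          rw [hfy] at this
          have : y = z := w.injective this
          omega
        have hlt : w z < w v := by
          apply hP.2 z v hz.1
          exact Fin.lt_def.mpr hz.2
        rw [hwv] at hlt
        rw [← hfy] at hlt
        rw [fperm_lt_iff] at hlt
        exact ⟨hay, hlt⟩
      · intro z1 h1 z2 h2 he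
        have := congrArg (fun u => w⁻¹ (fperm M r u)) he
        simpa using this
      · intro y hy
        simp only [mem_filter, mem_univ, true_and] at hy
        refine ⟨w⁻¹ (fperm M r y), ?_, by simp⟩
        simp only [mem_filter, mem_univ, true_and]
        set z : Fin r := w⁻¹ (fperm M r y) with hz
        have hwz : w z = fperm M r y := by rw [hz]; simp
        have haz : a ≤ z.val := by
          by_contra hc
          push_neg at hc
          have h1 : w z = fperm M r z := hP.1 z hc
          have : z = y := (fperm M r).injective (h1.symm.trans hwz)
          omega
        refine ⟨haz, ?_⟩
        have hlt : fperm M r y < fperm M r A := by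
          rw [fperm_lt_iff]
          exact hy.2
        rw [← hwz, ← hwv] at hlt
        rw [Fin.lt_def] at hlt
        by_contra hc
        push_neg at hc
        rcases Nat.eq_or_lt_of_le hc with hc1 | hc1
        · have : v = z := Fin.ext hc1
          rw [this] at hlt
          omega
        · have h2 := Fin.lt_def.mp (hP.2 v z hva (Fin.lt_def.mpr hc1))
          omega
    rw [← hbij, card_interval a v.val (by omega)]
    omega
  set n := nvalN M r a with hn
  have hbr : a + n < r := by rw [← hcard]; exact v.isLt
  have hveq : v = ⟨a + n, hbr⟩ := Fin.ext hcard
  constructor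
  · intro x hx
    rw [Equiv.Perm.mul_apply, descProd_apply a n hbr x]
    by_cases h1 : x.val < a
    · rw [if_pos (Or.inl h1)]
      exact hP.1 x h1
    · have hxa : x.val = a := by omega
      rw [if_neg (by omega), if_pos hxa, ← hveq, hwv]
      have : x = A := Fin.ext hxa
      rw [this]
  · intro x y hx hxy
    rw [Equiv.Perm.mul_apply, Equiv.Perm.mul_apply, descProd_apply a n hbr x,
      descProd_apply a n hbr y]
    have hxv : x.val ≠ a := by omega
    have hyv : y.val ≠ a := by omega
    have hy1 : a + 1 ≤ y.val := by
      have := Fin.lt_def.mp hxy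
      omega
    -- both arguments are ≥ a, and strictly ordered
    have key : ∀ u : Fin r, a + 1 ≤ u.val →
        ((if u.val < a ∨ a + n < u.val then u
          else if u.val = a then (⟨a + n, hbr⟩ : Fin r) else ⟨u.val - 1, by omega⟩) : Fin r).val
          = if u.val ≤ a + n then u.val - 1 else u.val := by
      intro u hu
      by_cases hc : u.val ≤ a + n
      · rw [if_neg (by omega), if_neg (by omega), if_pos hc]
      · rw [if_pos (by omega), if_neg hc]
    have hgoal := key x hx
    have hgoal' := key y hy1
    have hxyv := Fin.lt_def.mp hxy
    apply hP.2
    · rw [hgoal]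
      split_ifs <;> omega
    · rw [Fin.lt_def, hgoal, hgoal']
      split_ifs <;> omega

lemma Pinv_final {N : ℕ} (M : Fin N → Fin N → ℕ) {r : ℕ} {w : Equiv.Perm (Fin r)}
    (hP : Pinv M w r) : w = fperm M r :=
  Equiv.ext (fun x => hP.1 x x.isLt)

/-! ### nval computations -/

lemma nval_eq {N r : ℕ} (M : Fin N → Fin N → ℕ) (hc : ptil (colSums M) N = r)
    {a : ℕ} (ha : a < r) :
    nvalN M r a = ((univ : Finset (Fin r)).filter
      (fun y => cellRowN M y.val < cellRowN M a ∧ colBN M a < colBN M y.val)).card := by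
  rw [nvalN]
  refine congrArg Finset.card ?_
  apply Finset.filter_congr
  intro y _
  constructor
  · rintro ⟨hay, hK⟩
    rw [KN_lt_iff M hc y.isLt ha] at hK
    rcases hK with h1 | ⟨h1, h2 | ⟨h2, h3⟩⟩
    · refine ⟨h1, ?_⟩
      have hcy : colBN M a ≤ colBN M y.val := colB_mono M hay
      rcases Nat.eq_or_lt_of_le hcy with he | hlt
      · have := cellRow_mono M hay he
        omega
      · exact hlt
    · have := colB_mono M hay
      omega
    · omega
  · rintro ⟨h1, h2⟩
    have hya : a ≤ y.val := by
      by_contra hcon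
      push_neg at hcon
      have := colB_mono M (le_of_lt hcon)
      omega
    refine ⟨hya, ?_⟩
    rw [KN_lt_iff M hc y.isLt ha]
    exact Or.inl h1

lemma cell_fiber {N r : ℕ} (M : Fin N → Fin N → ℕ) (hc : ptil (colSums M) N = r)
    (k l : Fin N) :
    ((univ : Finset (Fin r)).filter
      (fun z => cellRowN M z.val = k.val ∧ colBN M z.val = l.val)).card = M k l := by
  have hbound : mtil M (k.val + 1) (l.val + 1) ≤ r := by
    rw [← hc]
    calc mtil M (k.val + 1) (l.val + 1) ≤ mtil M N (l.val + 1) :=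
          mtil_mono M (l.val + 1) (by omega)
      _ = ptil (colSums M) (l.val + 1) := mtil_top M _
      _ ≤ ptil (colSums M) N := ptil_mono _ (by omega)
  have hset : ((univ : Finset (Fin r)).filter
        (fun z => cellRowN M z.val = k.val ∧ colBN M z.val = l.val))
      = (univ : Finset (Fin r)).filter
        (fun z => mtil M k.val (l.val + 1) ≤ z.val ∧ z.val < mtil M (k.val + 1) (l.val + 1)) := by
    ext z
    simp only [mem_filter, mem_univ, true_and]
    constructor
    · rintro ⟨h1, h2⟩
      have co := coords M hc z.isLt
      refine ⟨?_, ?_⟩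
      · have := co.cellR_le
        rw [h1, h2] at this
        exact this
      · have := co.lt_cellR
        rw [h1, h2] at this
        exact this
    · rintro ⟨h1, h2⟩
      have hcol : colBN M z.val = l.val := by
        apply colB_eq M l.isLt
        · calc ptil (colSums M) l.val = mtil M 0 (l.val + 1) := by rw [mtil_zero, colPS_eq]
            _ ≤ mtil M k.val (l.val + 1) := mtil_mono M _ (Nat.zero_le _)
            _ ≤ z.val := h1
        · calc z.val < mtil M (k.val + 1) (l.val + 1) := h2
            _ ≤ mtil M N (l.val + 1) := mtil_mono M _ (by omega)
            _ = ptil (colSums M) (l.val + 1) := mtil_top M _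
      exact ⟨cellRow_eq M hcol k.isLt h1 h2, hcol⟩
  rw [hset, card_interval _ _ hbound, mtil_succ M k.isLt l.isLt]
  simp only [Fin.eta]
  omega

lemma nval_D {N r : ℕ} (M : Fin N → Fin N → ℕ) (hc : ptil (colSums M) N = r)
    {a : ℕ} (ha : a < r) :
    nvalN M r a = ∑ p : Fin N × Fin N,
      if p.1.val < cellRowN M a ∧ colBN M a < p.2.val then M p.1 p.2 else 0 := by
  rw [nval_eq M hc ha, Fintype.sum_prod_type]
  rw [card_cells M (fun z => cellRowN M z.val) (fun z => colBN M z.val)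
    (fun z => (coords M hc z.isLt).cellR_lt) (fun z => (coords M hc z.isLt).colB_lt)
    (cell_fiber M hc) (fun k l => k < cellRowN M a ∧ colBN M a < l)]

lemma sigma_decomp' {N r : ℕ} (M : Fin N → Fin N → ℕ) (hc : ptil (colSums M) N = r)
    {a i j : ℕ} (ha : a < r) (hrow : cellRowN M a = i) (hcol : colBN M a = j) :
    sigmaS M i (j + 1) = mtil M i (j + 1) + nvalN M r a := by
  rw [nval_D M hc ha, hrow, hcol]
  exact sigma_decomp M i j

/-! ### Walking the invariant through the product -/

lemma listProd_range_succ {G : Type*} [Monoid G] (f : ℕ → G) (n : ℕ) :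
    ((List.range (n + 1)).map f).prod = ((List.range n).map f).prod * f n := by
  rw [List.range_succ, List.map_append, List.prod_append, List.map_singleton,
    List.prod_singleton]

lemma Pinv_cell {N r : ℕ} {M : Fin N → Fin N → ℕ} (hc : ptil (colSums M) N = r)
    {i j : ℕ} (hi : i < N) (hj : j < N) {w : Equiv.Perm (Fin r)}
    (hP : Pinv M w (mtil M i (j + 1))) :
    Pinv M (w * wE r M (i + 1) (j + 1)) (mtil M (i + 1) (j + 1)) := by
  have hent : ent M (i + 1) (j + 1) = M ⟨i, hi⟩ ⟨j, hj⟩ := by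
    rw [ent, dif_pos (⟨by omega, by omega, by omega, by omega⟩ :
      1 ≤ i + 1 ∧ i + 1 ≤ N ∧ 1 ≤ j + 1 ∧ j + 1 ≤ N)]
    simp only [Nat.add_sub_cancel]
  have hub : mtil M (i + 1) (j + 1) ≤ r := by
    rw [← hc]
    calc mtil M (i + 1) (j + 1) ≤ mtil M N (j + 1) := mtil_mono M (j + 1) (by omega)
      _ = ptil (colSums M) (j + 1) := mtil_top M _
      _ ≤ ptil (colSums M) N := ptil_mono _ (by omega)
  have hsucc := mtil_succ M hi hj
  have main : ∀ c, c ≤ M ⟨i, hi⟩ ⟨j, hj⟩ →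
      Pinv M (w * ((List.range c).map (fun x =>
        descProd r (sigmaS M (i + 1 - 1) (j + 1) + x)
          (sigmaS M (i + 1 - 1) (j + 1) - mtil M (i + 1 - 1) (j + 1)))).prod)
        (mtil M i (j + 1) + c) := by
    intro c
    induction c with
    | zero =>
        intro _
        simpa using hP
    | succ c ih =>
        intro hcle
        have hprev := ih (by omega)
        have halt : mtil M i (j + 1) + c < r := by omega
        have hl1 : ptil (colSums M) j ≤ mtil M i (j + 1) + c := by
          have h0 : ptil (colSums M) j = mtil M 0 (j + 1) := by rw [mtil_zero, colPS_eq]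
          have h2 : mtil M 0 (j + 1) ≤ mtil M i (j + 1) :=
            mtil_mono M (j + 1) (Nat.zero_le i)
          omega
        have hl2 : mtil M i (j + 1) + c < ptil (colSums M) (j + 1) := by
          have h2 : mtil M (i + 1) (j + 1) ≤ mtil M N (j + 1) :=
            mtil_mono M (j + 1) (show i + 1 ≤ N by omega)
          rw [mtil_top] at h2
          omega
        have hcoordB : colBN M (mtil M i (j + 1) + c) = j := colB_eq M hj hl1 hl2
        have hcoordR : cellRowN M (mtil M i (j + 1) + c) = i :=
          cellRow_eq M hcoordB hi (by omega) (by omega)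
        have hsig := sigma_decomp' M hc halt hcoordR hcoordB
        have hstep := Pinv_step M halt hprev
        have harg2 : sigmaS M (i + 1 - 1) (j + 1) - mtil M (i + 1 - 1) (j + 1)
            = nvalN M r (mtil M i (j + 1) + c) := by
          simp only [Nat.add_sub_cancel]
          omega
        have harg3 : mtil M i (j + 1) + c
              + (sigmaS M (i + 1 - 1) (j + 1) - mtil M (i + 1 - 1) (j + 1))
            = sigmaS M (i + 1 - 1) (j + 1) + c := by
          simp only [Nat.add_sub_cancel]
          omega
        rw [← harg2, harg3] at hstep
        rw [listProd_range_succ, ← mul_assoc]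
        exact hstep
  have hfin := main (M ⟨i, hi⟩ ⟨j, hj⟩) le_rfl
  rw [wE, hent, hsucc]
  exact hfin

lemma Pinv_walk0 {N r : ℕ} {M : Fin N → Fin N → ℕ}
    {A B : ℕ} (hAB : A ≤ B) (hB : B ≤ r)
    (hzero : ∀ a, A ≤ a → a < B → nvalN M r a = 0)
    {w : Equiv.Perm (Fin r)} (hP : Pinv M w A) : Pinv M w B := by
  obtain ⟨d, rfl⟩ := Nat.exists_eq_add_of_le hAB
  have main : ∀ e, e ≤ d → Pinv M w (A + e) := by
    intro e
    induction e with
    | zero => intro _; simpa using hP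
    | succ e ih =>
        intro he
        have hprev := ih (by omega)
        have halt : A + e < r := by omega
        have hzz : nvalN M r (A + e) = 0 := hzero (A + e) (by omega) (by omega)
        have hstep := Pinv_step M halt hprev
        rw [hzz] at hstep
        have hone : descProd r (A + e + 0) 0 = 1 := rfl
        rw [hone, mul_one] at hstep
        exact hstep
  exact main d le_rfl

lemma nval_zero_cell0 {N r : ℕ} (M : Fin N → Fin N → ℕ) (hc : ptil (colSums M) N = r)
    {a : ℕ} (ha : a < r) (h : cellRowN M a = 0) : nvalN M r a = 0 := by
  rw [nval_eq M hc ha, Finset.card_eq_zero, Finset.filter_eq_empty_iff]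
  intro y _
  rw [h]
  omega

lemma Pinv_row0 {N r : ℕ} {M : Fin N → Fin N → ℕ} (hc : ptil (colSums M) N = r)
    {j : ℕ} (hj : j < N) {w : Equiv.Perm (Fin r)}
    (hP : Pinv M w (mtil M 0 (j + 1))) : Pinv M w (mtil M 1 (j + 1)) := by
  have h0N : (0 : ℕ) < N := by omega
  apply Pinv_walk0 (show mtil M 0 (j + 1) ≤ mtil M 1 (j + 1) from
    mtil_mono M (j + 1) (by omega : (0:ℕ) ≤ 1)) ?_ ?_ hP
  · rw [← hc]
    calc mtil M 1 (j + 1) ≤ mtil M N (j + 1) := mtil_mono M (j + 1) (by omega)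
      _ = ptil (colSums M) (j + 1) := mtil_top M _
      _ ≤ ptil (colSums M) N := ptil_mono _ (by omega)
  · intro a h1 h2
    have ha : a < r := by
      have h3 : mtil M 1 (j + 1) ≤ mtil M N (j + 1) := mtil_mono M (j + 1) (by omega)
      rw [mtil_top M j] at h3
      have h4 : ptil (colSums M) (j + 1) ≤ ptil (colSums M) N := ptil_mono _ (by omega)
      omega
    have hl1 : ptil (colSums M) j ≤ a := by
      have : ptil (colSums M) j = mtil M 0 (j + 1) := by rw [mtil_zero, colPS_eq]
      omega
    have hl2 : a < ptil (colSums M) (j + 1) := by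
      have h2' : mtil M 1 (j + 1) ≤ mtil M N (j + 1) := mtil_mono M (j + 1) (by omega)
      rw [mtil_top M j] at h2'
      omega
    have hcoordB : colBN M a = j := colB_eq M hj hl1 hl2
    have hcoordR : cellRowN M a = 0 := cellRow_eq M hcoordB h0N h1 h2
    exact nval_zero_cell0 M hc ha hcoordR

lemma Pinv_col {N r : ℕ} {M : Fin N → Fin N → ℕ} (hc : ptil (colSums M) N = r)
    {j : ℕ} (hj : j < N) {w : Equiv.Perm (Fin r)}
    (hP : Pinv M w (mtil M 0 (j + 1))) :
    Pinv M (w * colProd r M (j + 1)) (mtil M N (j + 1)) := by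
  have main : ∀ s, s ≤ N - 1 →
      Pinv M (w * ((List.range s).map (fun t => wE r M (t + 2) (j + 1))).prod)
        (mtil M (s + 1) (j + 1)) := by
    intro s
    induction s with
    | zero =>
        intro _
        have := Pinv_row0 hc hj hP
        simpa using this
    | succ s ih =>
        intro hs
        have h1 := ih (by omega)
        have h2 := Pinv_cell hc (show s + 1 < N by omega) hj h1
        rw [listProd_range_succ, ← mul_assoc]
        exact h2
  have hfin := main (N - 1) le_rfl
  have hN1 : N - 1 + 1 = N := by omega
  have heq : mtil M (N - 1 + 1) (j + 1) = mtil M N (j + 1) := by rw [hN1]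
  rw [colProd]
  exact heq ▸ hfin

lemma Pinv_piProd {N r : ℕ} {M : Fin N → Fin N → ℕ} (hc : ptil (colSums M) N = r)
    (hN : 1 ≤ N) :
    Pinv M (piProd r M (N - 1)) (ptil (colSums M) (N - 1)) := by
  have main : ∀ t, t ≤ N - 1 →
      Pinv M (((List.range t).map (fun c => colProd r M (c + 1))).prod)
        (ptil (colSums M) t) := by
    intro t
    induction t with
    | zero =>
        intro _
        rw [ptil_zero]
        simpa using Pinv_zero M (r := r)
    | succ t ih =>
        intro ht
        have h1 := ih (by omega)
        have h0 : mtil M 0 (t + 1) = ptil (colSums M) t := by rw [mtil_zero, colPS_eq]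
        rw [← h0] at h1
        have h2 := Pinv_col hc (show t < N by omega) h1
        rw [mtil_top] at h2
        rw [listProd_range_succ]
        exact h2
  exact main (N - 1) le_rfl

lemma piProd_eq_fperm {N r : ℕ} {M : Fin N → Fin N → ℕ} (hc : ptil (colSums M) N = r)
    (hN : 1 ≤ N) : piProd r M (N - 1) = fperm M r := by
  apply Pinv_final
  apply Pinv_walk0 (B := r) (ptil_mono _ (by omega) |>.trans hc.le) le_rfl ?_
    (Pinv_piProd hc hN)
  intro a h1 h2
  have hl2 : a < ptil (colSums M) (N - 1 + 1) := by
    rw [show N - 1 + 1 = N by omega, hc]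
    exact h2
  have hcoordB : colBN M a = N - 1 := colB_eq M (by omega) h1 hl2
  rw [nval_eq M hc h2, Finset.card_eq_zero, Finset.filter_eq_empty_iff]
  intro y _
  have := (coords M hc y.isLt).colB_lt
  rw [hcoordB]
  omega

/-! ### Blocks -/

lemma blockOf_eq {N r : ℕ} (lam : Fin N → ℕ) {z : Fin r} {i : ℕ} (hi : i < N)
    (h1 : ptil lam i ≤ z.val) (h2 : z.val < ptil lam (i + 1)) : blockOf lam z = i := by
  rw [blockOf]
  exact idx_eq _ (ptil_mono _) hi h1 h2

lemma blockOf_coords {N r : ℕ} (lam : Fin N → ℕ) (hl : ptil lam N = r) (z : Fin r) :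
    blockOf lam z < N ∧ ptil lam (blockOf lam z) ≤ z.val
      ∧ z.val < ptil lam (blockOf lam z + 1) := by
  have h0 : ptil lam 0 ≤ z.val := by rw [ptil_zero]; omega
  have hN : z.val < ptil lam N := by rw [hl]; exact z.isLt
  obtain ⟨i, h1, h2, h3⟩ := idx_ex (ptil lam) h0 hN
  have he : blockOf lam z = i := blockOf_eq lam h1 h2 h3
  rw [he]
  exact ⟨h1, h2, h3⟩

lemma blockOf_mono {N r : ℕ} (lam : Fin N → ℕ) {z z' : Fin r} (h : z.val ≤ z'.val) :
    blockOf lam z ≤ blockOf lam z' := by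
  apply Finset.card_le_card
  intro i hi
  simp only [mem_filter, mem_range] at hi ⊢
  exact ⟨hi.1, le_trans hi.2 h⟩

lemma mem_blockSet_iff {N r : ℕ} (lam : Fin N → ℕ) (hl : ptil lam N = r) (i : Fin N)
    (z : Fin r) : z ∈ blockSet r lam (i.val + 1) ↔ blockOf lam z = i.val := by
  rw [blockSet, mem_filter]
  have hred : i.val + 1 - 1 = i.val := rfl
  rw [hred]
  constructor
  · rintro ⟨_, h1, h2⟩
    exact blockOf_eq lam i.isLt h1 h2
  · intro h
    obtain ⟨_, h2, h3⟩ := blockOf_coords lam hl z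
    rw [h] at h2 h3
    exact ⟨mem_univ _, h2, h3⟩

lemma ptil_colSums_eq {N r : ℕ} (M : Fin N → Fin N → ℕ)
    (hMr : ∑ i, ∑ j, M i j = r) : ptil (colSums M) N = r := by
  rw [ptil_N, ← hMr, Finset.sum_comm]
  exact Finset.sum_congr rfl (fun l _ => rfl)

lemma ptil_rowSums_eq {N r : ℕ} (M : Fin N → Fin N → ℕ)
    (hMr : ∑ i, ∑ j, M i j = r) : ptil (rowSums M) N = r := by
  rw [ptil_N, ← hMr]
  exact Finset.sum_congr rfl (fun l _ => rfl)

lemma rowsum_count {N : ℕ} (M : Fin N → Fin N → ℕ) (i : ℕ) :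
    (∑ k : Fin N, ∑ l : Fin N, if k.val < i then M k l else 0) = ptil (rowSums M) i := by
  rw [ptil]
  apply Finset.sum_congr rfl
  intro k _
  by_cases h : k.val < i
  · rw [if_pos (by omega), rowSums]
    exact Finset.sum_congr rfl (fun l _ => if_pos h)
  · rw [if_neg (by omega)]
    exact Finset.sum_eq_zero (fun l _ => if_neg h)

/-! ### Row block of `fperm` -/

lemma fperm_row {N r : ℕ} (M : Fin N → Fin N → ℕ) (hc : ptil (colSums M) N = r)
    (hrow : ptil (rowSums M) N = r) (z : Fin r) :
    blockOf (rowSums M) (fperm M r z) = cellRowN M z.val := by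
  set i := cellRowN M z.val with hi
  have hiN : i < N := (coords M hc z.isLt).cellR_lt
  apply blockOf_eq (rowSums M) hiN
  · -- lower bound on rank
    rw [fperm_val, rankf]
    have hsub : (univ : Finset (Fin r)).filter (fun y => cellRowN M y.val < i)
        ⊆ (univ : Finset (Fin r)).filter (fun y => KN M r y.val < KN M r z.val) := by
      intro y hy
      simp only [mem_filter, mem_univ, true_and] at hy ⊢
      rw [KN_lt_iff M hc y.isLt z.isLt]
      exact Or.inl hy
    have hcount := card_cells M (fun y => cellRowN M y.val) (fun y => colBN M y.val)
      (fun y => (coords M hc y.isLt).cellR_lt) (fun y => (coords M hc y.isLt).colB_lt)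
      (cell_fiber M hc) (fun k _ => k < i)
    have hc2 := Finset.card_le_card hsub
    rw [hcount, rowsum_count] at hc2
    exact hc2
  · -- upper bound on rank
    rw [fperm_val, rankf]
    have hsub : (univ : Finset (Fin r)).filter (fun y => KN M r y.val < KN M r z.val)
        ⊂ (univ : Finset (Fin r)).filter (fun y => cellRowN M y.val < i + 1) := by
      rw [Finset.ssubset_iff_of_subset]
      · exact ⟨z, mem_filter.mpr ⟨mem_univ _, by omega⟩, by simp⟩
      · intro y hy
        simp only [mem_filter, mem_univ, true_and] at hy ⊢
        rw [KN_lt_iff M hc y.isLt z.isLt] at hy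
        rcases hy with h1 | ⟨h1, _⟩ <;> omega
    have hcount := card_cells M (fun y => cellRowN M y.val) (fun y => colBN M y.val)
      (fun y => (coords M hc y.isLt).cellR_lt) (fun y => (coords M hc y.isLt).colB_lt)
      (cell_fiber M hc) (fun k _ => k < i + 1)
    have hc2 := Finset.card_lt_card hsub
    rw [hcount, rowsum_count] at hc2
    exact hc2

lemma fperm_fiber {N r : ℕ} (M : Fin N → Fin N → ℕ) (hc : ptil (colSums M) N = r)
    (hrow : ptil (rowSums M) N = r) (k l : Fin N) :
    ((univ : Finset (Fin r)).filter
      (fun z => blockOf (rowSums M) (fperm M r z) = k.val ∧ colBN M z.val = l.val)).card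
      = M k l := by
  rw [← cell_fiber M hc k l]
  refine congrArg Finset.card ?_
  apply Finset.filter_congr
  intro z _
  rw [fperm_row M hc hrow z]

/-! ### Inversion counting -/

set_option maxHeartbeats 1000000 in
lemma psi_card {N r : ℕ} (M : Fin N → Fin N → ℕ) (R C : Fin r → ℕ)
    (hR : ∀ z, R z < N) (hC : ∀ z, C z < N)
    (hfib : ∀ k l : Fin N,
      ((univ : Finset (Fin r)).filter (fun z => R z = k.val ∧ C z = l.val)).card = M k l) :
    ((univ : Finset (Fin r × Fin r)).filter
      (fun p => R p.2 < R p.1 ∧ C p.1 < C p.2)).card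
      = ∑ i : Fin N, ∑ j : Fin N,
          M i j * ∑ kk : Fin N, ∑ ll : Fin N,
            (if kk.val < i.val ∧ j.val < ll.val then M kk ll else 0) := by
  rw [card_pair (fun x y => R y < R x ∧ C x < C y)]
  have hx : ∀ x : Fin r,
      ((univ : Finset (Fin r)).filter (fun y => R y < R x ∧ C x < C y)).card
        = ∑ kk : Fin N, ∑ ll : Fin N,
            (if kk.val < R x ∧ C x < ll.val then M kk ll else 0) :=
    fun x => card_cells M R C hR hC hfib (fun k l => k < R x ∧ C x < l)
  calc ∑ x : Fin r, ((univ : Finset (Fin r)).filter (fun y => R y < R x ∧ C x < C y)).card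
      = ∑ x : Fin r, (fun a b => ∑ kk : Fin N, ∑ ll : Fin N,
          (if kk.val < a ∧ b < ll.val then M kk ll else 0)) (R x) (C x) := by
        exact Finset.sum_congr rfl (fun x _ => hx x)
    _ = ∑ i : Fin N, ∑ j : Fin N, M i j * ∑ kk : Fin N, ∑ ll : Fin N,
          (if kk.val < i.val ∧ j.val < ll.val then M kk ll else 0) := by
        exact sum_cells M R C hR hC hfib
          (fun a b => ∑ kk : Fin N, ∑ ll : Fin N,
            (if kk.val < a ∧ b < ll.val then M kk ll else 0))

/-! ### Downward closed sets and the row blocks of a minimal representative -/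

lemma downward_interval {r : ℕ} (S : Finset (Fin r)) (a b : ℕ)
    (hsub : ∀ y ∈ S, a ≤ y.val ∧ y.val < b) (hb : b ≤ r)
    (hdc : ∀ y ∈ S, ∀ y' : Fin r, a ≤ y'.val → y'.val ≤ y.val → y' ∈ S) :
    ∀ y : Fin r, (y ∈ S ↔ a ≤ y.val ∧ y.val < a + S.card) := by
  intro y
  constructor
  · intro hy
    refine ⟨(hsub y hy).1, ?_⟩
    have hss : (univ : Finset (Fin r)).filter (fun z => a ≤ z.val ∧ z.val < y.val + 1) ⊆ S := by
      intro z hz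
      simp only [mem_filter, mem_univ, true_and] at hz
      exact hdc y hy z hz.1 (by omega)
    have hcard := Finset.card_le_card hss
    rw [card_interval a (y.val + 1) (by have := y.isLt; omega)] at hcard
    have := (hsub y hy).1
    omega
  · rintro ⟨h1, h2⟩
    by_contra hy
    have hss : S ⊆ (univ : Finset (Fin r)).filter (fun z => a ≤ z.val ∧ z.val < y.val) := by
      intro z hz
      simp only [mem_filter, mem_univ, true_and]
      refine ⟨(hsub z hz).1, ?_⟩
      by_contra hcon
      push_neg at hcon
      exact hy (hdc z hz y h1 hcon)
    have hcard := Finset.card_le_card hss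
    rw [card_interval a y.val (by have := y.isLt; omega)] at hcard
    omega

lemma row_of_dM {N r : ℕ} {M : Fin N → Fin N → ℕ} (hc : ptil (colSums M) N = r)
    (hrow : ptil (rowSums M) N = r) {w : Equiv.Perm (Fin r)}
    (hfibd : ∀ k l : Fin N, ((univ : Finset (Fin r)).filter
      (fun z => blockOf (rowSums M) (w z) = k.val ∧ colBN M z.val = l.val)).card = M k l)
    (P2 : ∀ x y : Fin r, colBN M x.val = colBN M y.val → x < y → w x < w y)
    (z : Fin r) : blockOf (rowSums M) (w z) = cellRowN M z.val := by
  have co := coords M hc z.isLt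
  set j := colBN M z.val with hj
  set i := cellRowN M z.val with hi
  have hjN : j < N := co.colB_lt
  set q : ℕ → ℕ := fun k => ∑ kk : Fin N, ∑ ll : Fin N,
    (if kk.val < k ∧ ll.val = j then M kk ll else 0) with hq
  have hmq : ∀ k, mtil M k (j + 1) = ptil (colSums M) j + q k := by
    intro k
    rw [mtil, colPS_eq, hq]
    congr 1
    rw [Fintype.sum_prod_type]
    refine Finset.sum_congr rfl (fun kk _ => Finset.sum_congr rfl (fun ll _ => ?_))
    dsimp only
    exact if_congr ⟨fun h => ⟨by omega, by omega⟩, fun h => ⟨by omega, by omega⟩⟩ rfl rfl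
  set A : ℕ → Finset (Fin r) := fun k => (univ : Finset (Fin r)).filter
    (fun y => blockOf (rowSums M) (w y) < k ∧ colBN M y.val = j) with hA
  have hAcard : ∀ k, (A k).card = q k := by
    intro k
    rw [hA, hq]
    exact card_cells M (fun y => blockOf (rowSums M) (w y)) (fun y => colBN M y.val)
      (fun y => (blockOf_coords _ hrow _).1) (fun y => (coords M hc y.isLt).colB_lt)
      hfibd (fun a b => a < k ∧ b = j)
  have hAint : ∀ k, ∀ y : Fin r,
      y ∈ A k ↔ ptil (colSums M) j ≤ y.val ∧ y.val < ptil (colSums M) j + (A k).card := by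
    intro k
    apply downward_interval (A k) (ptil (colSums M) j) (ptil (colSums M) (j + 1)) ?_ ?_ ?_
    · intro y hy
      rw [hA, mem_filter] at hy
      have co2 := coords M hc y.isLt
      have e1 := co2.colB_le
      have e2 := co2.lt_colB
      rw [hy.2.2] at e1 e2
      exact ⟨e1, e2⟩
    · rw [← hc]
      exact ptil_mono _ (by omega)
    · intro y hy y' h1 h2
      rw [hA, mem_filter] at hy ⊢
      obtain ⟨_, hy1, hy2⟩ := hy
      have hup : y.val < ptil (colSums M) (j + 1) := by
        have co2 := coords M hc y.isLt
        have e2 := co2.lt_colB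
        rw [hy2] at e2
        exact e2
      have hcol' : colBN M y'.val = j := colB_eq M hjN h1 (by omega)
      refine ⟨mem_univ _, ?_, hcol'⟩
      rcases Nat.eq_or_lt_of_le h2 with he | hlt
      · have : y' = y := Fin.ext he
        rw [this]
        exact hy1
      · have hlt2 := P2 y' y (by rw [hcol', hy2]) (Fin.lt_def.mpr hlt)
        have hmono := blockOf_mono (rowSums M) (Fin.le_def.mp (le_of_lt hlt2))
        omega
  have hz1 : z ∈ A (i + 1) := by
    rw [hAint (i + 1) z, hAcard, ← hmq]
    exact ⟨co.colB_le, co.lt_cellR⟩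
  have hz2 : z ∉ A i := by
    rw [hAint i z, hAcard, ← hmq]
    rintro ⟨_, hcon⟩
    have h3 := co.cellR_le
    rw [← hj, ← hi] at h3
    omega
  rw [hA, mem_filter] at hz1
  have h2 : ¬ (blockOf (rowSums M) (w z) < i) := fun hcon =>
    hz2 (mem_filter.mpr ⟨mem_univ _, hcon, hj.symm⟩)
  have h1 := hz1.2.1
  omega

/-! ### Gluing fibers and strict monotony -/

lemma exists_perm_fiber {α β : Type*} [Fintype α] [DecidableEq α] [DecidableEq β]
    (f g : α → β)
    (h : ∀ b, ((univ : Finset α).filter (fun x => f x = b)).card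
      = ((univ : Finset α).filter (fun x => g x = b)).card) :
    ∃ e : Equiv.Perm α, ∀ x, f (e x) = g x := by
  have hcard : ∀ b, Fintype.card {x // g x = b} = Fintype.card {x // f x = b} := by
    intro b
    rw [Fintype.card_subtype, Fintype.card_subtype]
    exact (h b).symm
  have ee : ∀ b, {x // g x = b} ≃ {x // f x = b} := fun b => Fintype.equivOfCardEq (hcard b)
  refine ⟨(Equiv.sigmaFiberEquiv g).symm.trans
    ((Equiv.sigmaCongrRight ee).trans (Equiv.sigmaFiberEquiv f)), fun x => ?_⟩
  exact (ee (g x) ⟨x, rfl⟩).property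

lemma eq_fperm_of_Kmono {N r : ℕ} {M : Fin N → Fin N → ℕ} {w : Equiv.Perm (Fin r)}
    (hmono : ∀ x y : Fin r, KN M r x.val < KN M r y.val → w x < w y) :
    w = fperm M r := by
  have h2 : ∀ x y : Fin r, fperm M r x < fperm M r y → w x < w y := fun x y h =>
    hmono x y ((fperm_lt_iff M x y).mp h)
  have hsm : StrictMono (fun t => w ((fperm M r)⁻¹ t)) := by
    intro t t' htt
    apply h2
    simpa using htt
  have hrange : Set.range (fun t => w ((fperm M r)⁻¹ t)) = Set.range (id : Fin r → Fin r) := by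
    rw [Set.range_id]
    apply Set.range_eq_univ.mpr
    intro u
    exact ⟨fperm M r (w⁻¹ u), by simp⟩
  have hid := (hsm.range_inj strictMono_id).mp hrange
  apply Equiv.ext
  intro x
  have := congrFun hid (fperm M r x)
  simpa using this

lemma mem_young_iff {r N : ℕ} (lam : Fin N → ℕ) (w : Equiv.Perm (Fin r)) :
    w ∈ young r lam ↔ ∀ x, blockOf lam (w x) = blockOf lam x := Iff.rfl

end SX

set_option maxHeartbeats 4000000 in
/-- Lemma `d_M`, first part.  `d_M` equals the column-by-column
product `(w_{2,1} ⋯ w_{N,1})(w_{2,2} ⋯ w_{N,2}) ⋯ (w_{2,N-1} ⋯ w_{N,N-1})`, and this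
expression is reduced; in particular
`ℓ(d_M) = Σ_{i,j} m_{i,j} · (Σ_{k<i, l>j} m_{k,l})`. -/
theorem stmt10 (N r : ℕ) (hN : 2 ≤ N) (M : Fin N → Fin N → ℕ)
    (hMr : ∑ i, ∑ j, M i j = r)
    (dM : Equiv.Perm (Fin r)) (hdM : isDM r M dM) :
    dM = piProd r M (N - 1) ∧
    clen dM = ∑ i : Fin N, ∑ j : Fin N,
      M i j * ∑ kk : Fin N, ∑ ll : Fin N, (if kk < i ∧ j < ll then M kk ll else 0) := by
  classical
  have hc : ptil (colSums M) N = r := SX.ptil_colSums_eq M hMr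
  have hrow : ptil (rowSums M) N = r := SX.ptil_rowSums_eq M hMr
  have hRb : ∀ (w : Equiv.Perm (Fin r)) (z : Fin r), blockOf (rowSums M) (w z) < N :=
    fun w z => (SX.blockOf_coords _ hrow _).1
  have hCb : ∀ z : Fin r, SX.colBN M z.val < N := fun z => (SX.coords M hc z.isLt).colB_lt
  -- fibers of dM
  have hfibd : ∀ k l : Fin N, ((univ : Finset (Fin r)).filter
      (fun z => blockOf (rowSums M) (dM z) = k.val ∧ SX.colBN M z.val = l.val)).card
        = M k l := by
    intro k l
    have h2 := hdM.2 k l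
    have himg : ((univ : Finset (Fin r)).filter
        (fun z => blockOf (rowSums M) (dM z) = k.val ∧ SX.colBN M z.val = l.val)).image dM
        = (blockSet r (rowSums M) (k.val + 1)) ∩ (blockSet r (colSums M) (l.val + 1)).image dM := by
      ext u
      simp only [Finset.mem_image, mem_filter, mem_univ, true_and, Finset.mem_inter]
      constructor
      · rintro ⟨z, ⟨hz1, hz2⟩, rfl⟩
        refine ⟨(SX.mem_blockSet_iff _ hrow k _).mpr hz1, z,
          (SX.mem_blockSet_iff _ hc l _).mpr ?_, rfl⟩
        rw [SX.blockOf_colB]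
        exact hz2
      · rintro ⟨h1, z, hz, rfl⟩
        refine ⟨z, ⟨(SX.mem_blockSet_iff _ hrow k _).mp h1, ?_⟩, rfl⟩
        rw [← SX.blockOf_colB M z]
        exact (SX.mem_blockSet_iff _ hc l _).mp hz
    rw [← h2, ← himg, Finset.card_image_of_injective _ dM.injective]
  -- generic inclusion of the forced pairs into the inversions
  have hsubgen : ∀ w : Equiv.Perm (Fin r),
      ((univ : Finset (Fin r × Fin r)).filter (fun p =>
        blockOf (rowSums M) (w p.2) < blockOf (rowSums M) (w p.1)
          ∧ SX.colBN M p.1.val < SX.colBN M p.2.val))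
      ⊆ (univ : Finset (Fin r × Fin r)).filter (fun p => p.1 < p.2 ∧ w p.2 < w p.1) := by
    intro w p hp
    simp only [mem_filter, mem_univ, true_and] at hp ⊢
    obtain ⟨h1, h2⟩ := hp
    constructor
    · rw [Fin.lt_def]
      by_contra hcon
      push_neg at hcon
      have := SX.colB_mono M (show p.2.val ≤ p.1.val from hcon)
      omega
    · rw [Fin.lt_def]
      by_contra hcon
      push_neg at hcon
      have := SX.blockOf_mono (rowSums M) (show (w p.1).val ≤ (w p.2).val from hcon)
      omega
  -- length of fperm
  have hfibf := SX.fperm_fiber M hc hrow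
  have hpsi_f := SX.psi_card M (fun z => blockOf (rowSums M) (SX.fperm M r z))
    (fun z => SX.colBN M z.val) (hRb _) hCb hfibf
  beta_reduce at hpsi_f
  have hinv_sub_f : ((univ : Finset (Fin r × Fin r)).filter
      (fun p => p.1 < p.2 ∧ SX.fperm M r p.2 < SX.fperm M r p.1))
      ⊆ ((univ : Finset (Fin r × Fin r)).filter (fun p =>
        blockOf (rowSums M) (SX.fperm M r p.2) < blockOf (rowSums M) (SX.fperm M r p.1)
          ∧ SX.colBN M p.1.val < SX.colBN M p.2.val)) := by
    intro p hp
    simp only [mem_filter, mem_univ, true_and] at hp ⊢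
    obtain ⟨h1, h2⟩ := hp
    have hK := (SX.fperm_lt_iff M p.2 p.1).mp h2
    rw [SX.KN_lt_iff M hc p.2.isLt p.1.isLt] at hK
    have hvlt := Fin.lt_def.mp h1
    have hcolle : SX.colBN M p.1.val ≤ SX.colBN M p.2.val := SX.colB_mono M (le_of_lt hvlt)
    rcases hK with hA | ⟨hA, hB | ⟨hB, hC2⟩⟩
    · have hcol : SX.colBN M p.1.val < SX.colBN M p.2.val := by
        rcases Nat.eq_or_lt_of_le hcolle with he | hlt
        · have := SX.cellRow_mono M (le_of_lt hvlt) he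
          omega
        · exact hlt
      rw [SX.fperm_row M hc hrow, SX.fperm_row M hc hrow]
      exact ⟨hA, hcol⟩
    · omega
    · omega
  have heqf : ((univ : Finset (Fin r × Fin r)).filter (fun p =>
        blockOf (rowSums M) (SX.fperm M r p.2) < blockOf (rowSums M) (SX.fperm M r p.1)
          ∧ SX.colBN M p.1.val < SX.colBN M p.2.val))
      = (univ : Finset (Fin r × Fin r)).filter
        (fun p => p.1 < p.2 ∧ SX.fperm M r p.2 < SX.fperm M r p.1) :=
    Finset.eq_of_subset_of_card_le (hsubgen (SX.fperm M r))
      (Finset.card_le_card hinv_sub_f)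
  have hclenf : clen (SX.fperm M r) = ∑ i : Fin N, ∑ j : Fin N,
      M i j * ∑ kk : Fin N, ∑ ll : Fin N,
        (if kk.val < i.val ∧ j.val < ll.val then M kk ll else 0) := by
    rw [clen, ← heqf]
    exact hpsi_f
  -- fperm belongs to the double coset of dM
  obtain ⟨e, he⟩ := SX.exists_perm_fiber
    (fun z : Fin r => ((⟨blockOf (rowSums M) (dM z), hRb dM z⟩ : Fin N),
      (⟨SX.colBN M z.val, hCb z⟩ : Fin N)))
    (fun z : Fin r => ((⟨SX.cellRowN M z.val, (SX.coords M hc z.isLt).cellR_lt⟩ : Fin N),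
      (⟨SX.colBN M z.val, hCb z⟩ : Fin N)))
    (by
      intro b
      have e1 : ((univ : Finset (Fin r)).filter (fun z =>
          ((⟨blockOf (rowSums M) (dM z), hRb dM z⟩ : Fin N),
            (⟨SX.colBN M z.val, hCb z⟩ : Fin N)) = b))
          = (univ : Finset (Fin r)).filter
            (fun z => blockOf (rowSums M) (dM z) = b.1.val ∧ SX.colBN M z.val = b.2.val) := by
        apply Finset.filter_congr
        intro z _
        simp only [Prod.ext_iff, Fin.ext_iff]
      have e2 : ((univ : Finset (Fin r)).filter (fun z =>
          ((⟨SX.cellRowN M z.val, (SX.coords M hc z.isLt).cellR_lt⟩ : Fin N),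
            (⟨SX.colBN M z.val, hCb z⟩ : Fin N)) = b))
          = (univ : Finset (Fin r)).filter
            (fun z => SX.cellRowN M z.val = b.1.val ∧ SX.colBN M z.val = b.2.val) := by
        apply Finset.filter_congr
        intro z _
        simp only [Prod.ext_iff, Fin.ext_iff]
      rw [e1, e2, hfibd b.1 b.2, SX.cell_fiber M hc b.1 b.2])
  have heR : ∀ z : Fin r, blockOf (rowSums M) (dM (e z)) = SX.cellRowN M z.val := by
    intro z
    have := congrArg (fun p : Fin N × Fin N => (Prod.fst p).val) (he z)
    simpa using this
  have heC : ∀ z : Fin r, SX.colBN M (e z).val = SX.colBN M z.val := by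
    intro z
    have := congrArg (fun p : Fin N × Fin N => (Prod.snd p).val) (he z)
    simpa using this
  have hey : e ∈ young r (colSums M) := by
    rw [SX.mem_young_iff]
    intro x
    rw [SX.blockOf_colB, SX.blockOf_colB]
    exact heC x
  have hxmem : (SX.fperm M r) * e⁻¹ * dM⁻¹ ∈ young r (rowSums M) := by
    rw [SX.mem_young_iff]
    intro z
    rw [Equiv.Perm.mul_apply, Equiv.Perm.mul_apply, SX.fperm_row M hc hrow]
    have h5 := heR (e⁻¹ (dM⁻¹ z))
    rw [show ∀ (p : Equiv.Perm (Fin r)) (x : Fin r), p (p⁻¹ x) = x from fun p x => p.apply_symm_apply x,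
      show ∀ (p : Equiv.Perm (Fin r)) (x : Fin r), p (p⁻¹ x) = x from fun p x => p.apply_symm_apply x] at h5
    exact h5.symm
  have hmem : SX.fperm M r ∈ dcoset r (rowSums M) (colSums M) dM := by
    refine ⟨(SX.fperm M r) * e⁻¹ * dM⁻¹, hxmem, e, hey, ?_⟩
    group
  have hmin := hdM.1 (SX.fperm M r) hmem
  -- inversions of dM coincide with the forced pairs
  have hpsi_d := SX.psi_card M (fun z => blockOf (rowSums M) (dM z))
    (fun z => SX.colBN M z.val) (hRb _) hCb hfibd
  beta_reduce at hpsi_d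
  have heqinv : ((univ : Finset (Fin r × Fin r)).filter (fun p =>
        blockOf (rowSums M) (dM p.2) < blockOf (rowSums M) (dM p.1)
          ∧ SX.colBN M p.1.val < SX.colBN M p.2.val))
      = (univ : Finset (Fin r × Fin r)).filter (fun p => p.1 < p.2 ∧ dM p.2 < dM p.1) := by
    apply Finset.eq_of_subset_of_card_le (hsubgen dM)
    rw [hpsi_d]
    calc ((univ : Finset (Fin r × Fin r)).filter
          (fun p => p.1 < p.2 ∧ dM p.2 < dM p.1)).card
        = clen dM := rfl
      _ ≤ clen (SX.fperm M r) := hmin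
      _ = _ := hclenf
  have P2 : ∀ x y : Fin r, SX.colBN M x.val = SX.colBN M y.val → x < y → dM x < dM y := by
    intro x y hcB hxy
    rcases lt_trichotomy (dM x) (dM y) with h | h | h
    · exact h
    · exact absurd (dM.injective h)
        (Fin.ne_of_val_ne (by have := Fin.lt_def.mp hxy; omega))
    · exfalso
      have hmem2 : (x, y) ∈ (univ : Finset (Fin r × Fin r)).filter
          (fun p => p.1 < p.2 ∧ dM p.2 < dM p.1) :=
        mem_filter.mpr ⟨mem_univ _, hxy, h⟩
      rw [← heqinv] at hmem2
      simp only [mem_filter, mem_univ, true_and] at hmem2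
      omega
  have P3 : ∀ x y : Fin r, x < y →
      blockOf (rowSums M) (dM x) = blockOf (rowSums M) (dM y) → dM x < dM y := by
    intro x y hxy hrB
    rcases lt_trichotomy (dM x) (dM y) with h | h | h
    · exact h
    · exact absurd (dM.injective h)
        (Fin.ne_of_val_ne (by have := Fin.lt_def.mp hxy; omega))
    · exfalso
      have hmem2 : (x, y) ∈ (univ : Finset (Fin r × Fin r)).filter
          (fun p => p.1 < p.2 ∧ dM p.2 < dM p.1) :=
        mem_filter.mpr ⟨mem_univ _, hxy, h⟩
      rw [← heqinv] at hmem2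
      simp only [mem_filter, mem_univ, true_and] at hmem2
      omega
  have hRdm : ∀ z : Fin r, blockOf (rowSums M) (dM z) = SX.cellRowN M z.val :=
    SX.row_of_dM hc hrow hfibd P2
  have hK : ∀ x y : Fin r, SX.KN M r x.val < SX.KN M r y.val → dM x < dM y := by
    intro x y h
    rw [SX.KN_lt_iff M hc x.isLt y.isLt] at h
    rcases h with h1 | ⟨h1, h2 | ⟨h2, h3⟩⟩
    · have hr2 : blockOf (rowSums M) (dM x) < blockOf (rowSums M) (dM y) := by
        rw [hRdm, hRdm]
        exact h1
      rcases lt_or_ge (dM x) (dM y) with hh | hh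
      · exact hh
      · have := SX.blockOf_mono (rowSums M) (Fin.le_def.mp hh)
        omega
    · have hxy : x < y := by
        rw [Fin.lt_def]
        by_contra hcon
        push_neg at hcon
        have := SX.colB_mono M (show y.val ≤ x.val from hcon)
        omega
      refine P3 x y hxy ?_
      rw [hRdm, hRdm]
      exact h1
    · exact P2 x y h2 (Fin.lt_def.mpr h3)
  have hdmeq : dM = SX.fperm M r := SX.eq_fperm_of_Kmono hK
  constructor
  · rw [hdmeq, SX.piProd_eq_fperm hc (by omega)]
  · rw [hdmeq, hclenf]
    simp only [Fin.lt_def]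
end

section
/- Let N ≥ 2, M = (m_{i,j}) ∈ M(N,r), and fix 1 ≤ h < N and 1 ≤ k ≤ N with m_{h+1,k} ≥ 1. Then ℓ(d_{M⁺_{h,k}}) = ℓ(d_M) + Σ_{j<k} m_{h+1,j} − Σ_{j>k} m_{h,j}. -/
open Equiv Finset

section L
variable {r N : ℕ}

lemma ptil_mono (lam : Fin N → ℕ) : Monotone (ptil lam) := by
  intro i j hij
  apply Finset.sum_le_sum
  intro l _
  by_cases h : l.val + 1 ≤ i
  · simp [h, le_trans h hij]
  · simp [h]

lemma ptil_of_ge (lam : Fin N → ℕ) {i : ℕ} (hi : N ≤ i) : ptil lam i = ∑ l, lam l := by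
  apply Finset.sum_congr rfl
  intro l _
  exact if_pos (le_trans l.isLt hi)

lemma ptil_zero (lam : Fin N → ℕ) : ptil lam 0 = 0 := by simp [ptil]

lemma blockOf_eq_of (lam : Fin N → ℕ) (hr : ptil lam N = r) (x : Fin r) (i : ℕ)
    (h1 : ptil lam i ≤ x.val) (h2 : x.val < ptil lam (i + 1)) : blockOf lam x = i := by
  have hx : (x : ℕ) < r := x.isLt
  have hiN : i < N := by
    by_contra hge
    push_neg at hge
    have e1 : ptil lam i = ∑ l, lam l := ptil_of_ge lam hge
    have e2 : ptil lam N = ∑ l, lam l := ptil_of_ge lam le_rfl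
    omega
  unfold blockOf
  have e : (Finset.range N).filter (fun j => ptil lam (j + 1) ≤ x.val)
      = (Finset.range N).filter (fun j => j < i) := by
    apply Finset.filter_congr
    intro j hj
    simp only [Finset.mem_range] at hj
    constructor
    · intro hle
      by_contra hnot
      push_neg at hnot
      have := ptil_mono lam (show i + 1 ≤ j + 1 by omega)
      omega
    · intro hlt
      have := ptil_mono lam (show j + 1 ≤ i from hlt)
      omega
  rw [e]
  have e2 : (Finset.range N).filter (fun j => j < i) = Finset.range i := by
    ext j; simp only [Finset.mem_filter, Finset.mem_range]; omega
  rw [e2, Finset.card_range]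

lemma blockOf_spec (lam : Fin N → ℕ) (hr : ptil lam N = r) (x : Fin r) :
    ptil lam (blockOf lam x) ≤ x.val ∧ x.val < ptil lam (blockOf lam x + 1) ∧ blockOf lam x < N := by
  classical
  have hx : (x : ℕ) < r := x.isLt
  set P := fun n => ptil lam n ≤ x.val with hP
  have h0 : P 0 := by simp [hP, ptil_zero]
  have hspec : P (Nat.findGreatest P N) := Nat.findGreatest_spec (Nat.zero_le N) h0
  set i := Nat.findGreatest P N with hi
  have hle : i ≤ N := Nat.findGreatest_le N
  have hiN : i < N := by
    rcases Nat.lt_or_ge i N with h | h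
    · exact h
    · exfalso
      have : i = N := le_antisymm hle h
      rw [this] at hspec
      simp only [hP] at hspec
      omega
  have hsucc : x.val < ptil lam (i + 1) := by
    by_contra hc
    push_neg at hc
    have := Nat.le_findGreatest (show i + 1 ≤ N from hiN) (show P (i+1) from hc)
    omega
  have heq : blockOf lam x = i := blockOf_eq_of lam hr x i hspec hsucc
  rw [heq]
  exact ⟨hspec, hsucc, hiN⟩

lemma blockOf_eq_iff (lam : Fin N → ℕ) (hr : ptil lam N = r) (x : Fin r) (i : ℕ) :
    blockOf lam x = i ↔ ptil lam i ≤ x.val ∧ x.val < ptil lam (i + 1) := by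
  constructor
  · rintro rfl
    exact ⟨(blockOf_spec lam hr x).1, (blockOf_spec lam hr x).2.1⟩
  · rintro ⟨h1, h2⟩
    exact blockOf_eq_of lam hr x i h1 h2

lemma blockOf_lt (lam : Fin N → ℕ) (hr : ptil lam N = r) (x : Fin r) : blockOf lam x < N :=
  (blockOf_spec lam hr x).2.2

lemma mem_blockSet_iff (lam : Fin N → ℕ) (hr : ptil lam N = r) (x : Fin r) (i : ℕ) :
    x ∈ blockSet r lam (i + 1) ↔ blockOf lam x = i := by
  unfold blockSet
  rw [Finset.mem_filter]
  simp only [Finset.mem_univ, true_and, Nat.add_sub_cancel]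
  exact (blockOf_eq_iff lam hr x i).symm

lemma blockOf_le_blockOf (lam : Fin N → ℕ) {a b : Fin r} (hab : a.val ≤ b.val) :
    blockOf lam a ≤ blockOf lam b := by
  apply Finset.card_le_card
  intro j hj
  simp only [Finset.mem_filter, Finset.mem_range] at *
  exact ⟨hj.1, le_trans hj.2 hab⟩

end L

def phiAux {r : ℕ} (a b : Fin r) (p : Fin r × Fin r) : Fin r × Fin r :=
  if p.2 = a then (p.1, b)
  else if p.1 = b then (a, p.2)
  else if p.2 = b ∧ p.1 < a then (p.1, a)
  else if p.1 = a ∧ b < p.2 then (b, p.2)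
  else p

def psiAux {r : ℕ} (a b : Fin r) (q : Fin r × Fin r) : Fin r × Fin r :=
  if q.2 = b ∧ q.1 < a then (q.1, a)
  else if q.1 = a ∧ b < q.2 then (b, q.2)
  else if q.2 = a then (q.1, b)
  else if q.1 = b then (a, q.2)
  else q

lemma psi_phi {r : ℕ} (a b : Fin r) (hab : a < b) (p : Fin r × Fin r) (hp : p.1 < p.2) :
    psiAux a b (phiAux a b p) = p := by
  obtain ⟨x, y⟩ := p
  have hxy : x < y := hp
  by_cases c1 : y = a
  · have e : phiAux a b (x, y) = (x, b) := by
      unfold phiAux; rw [if_pos (show (x, y).2 = a from c1)]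
    have hxa : x < a := c1 ▸ hxy
    rw [e]
    unfold psiAux
    rw [if_pos (show (x, b).2 = b ∧ (x, b).1 < a from ⟨rfl, hxa⟩)]
    rw [c1]
  · by_cases c2 : x = b
    · have hby : b < y := c2 ▸ hxy
      have e : phiAux a b (x, y) = (a, y) := by
        unfold phiAux
        rw [if_neg (show ¬((x, y).2 = a) from c1), if_pos (show (x, y).1 = b from c2)]
      rw [e]
      unfold psiAux
      rw [if_neg (show ¬((a, y).2 = b ∧ (a, y).1 < a) from fun h => (ne_of_gt hby) h.1),
          if_pos (show (a, y).1 = a ∧ b < (a, y).2 from ⟨rfl, hby⟩)]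
      rw [c2]
    · by_cases c3 : y = b ∧ x < a
      · have e : phiAux a b (x, y) = (x, a) := by
          unfold phiAux
          rw [if_neg (show ¬((x, y).2 = a) from c1), if_neg (show ¬((x, y).1 = b) from c2),
              if_pos (show (x, y).2 = b ∧ (x, y).1 < a from c3)]
        rw [e]
        unfold psiAux
        rw [if_neg (show ¬((x, a).2 = b ∧ (x, a).1 < a) from fun h => (ne_of_lt hab) h.1),
            if_neg (show ¬((x, a).1 = a ∧ b < (x, a).2) from fun h => absurd h.2 (asymm hab)),
            if_pos (show (x, a).2 = a from rfl)]
        rw [c3.1]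
      · by_cases c4 : x = a ∧ b < y
        · have e : phiAux a b (x, y) = (b, y) := by
            unfold phiAux
            rw [if_neg (show ¬((x, y).2 = a) from c1), if_neg (show ¬((x, y).1 = b) from c2),
                if_neg (show ¬((x, y).2 = b ∧ (x, y).1 < a) from c3),
                if_pos (show (x, y).1 = a ∧ b < (x, y).2 from c4)]
          rw [e]
          unfold psiAux
          rw [if_neg (show ¬((b, y).2 = b ∧ (b, y).1 < a) from fun h => (ne_of_gt c4.2) h.1),
              if_neg (show ¬((b, y).1 = a ∧ b < (b, y).2) from fun h => (ne_of_lt hab).symm h.1),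
              if_neg (show ¬((b, y).2 = a) from ne_of_gt (lt_trans hab c4.2)),
              if_pos (show (b, y).1 = b from rfl)]
          rw [c4.1]
        · have e : phiAux a b (x, y) = (x, y) := by
            unfold phiAux
            rw [if_neg (show ¬((x, y).2 = a) from c1), if_neg (show ¬((x, y).1 = b) from c2),
                if_neg (show ¬((x, y).2 = b ∧ (x, y).1 < a) from c3),
                if_neg (show ¬((x, y).1 = a ∧ b < (x, y).2) from c4)]
          rw [e]
          unfold psiAux
          rw [if_neg (show ¬((x, y).2 = b ∧ (x, y).1 < a) from c3),
              if_neg (show ¬((x, y).1 = a ∧ b < (x, y).2) from c4),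
              if_neg (show ¬((x, y).2 = a) from c1),
              if_neg (show ¬((x, y).1 = b) from c2)]

lemma phi_maps {r : ℕ} (w : Equiv.Perm (Fin r)) (a b : Fin r) (hab : a < b) (hw : w b < w a)
    (x y : Fin r) (hxy : x < y) (hcond : w (Equiv.swap a b y) < w (Equiv.swap a b x)) :
    phiAux a b (x, y) ≠ (a, b) ∧ (phiAux a b (x, y)).1 < (phiAux a b (x, y)).2 ∧
      w (phiAux a b (x, y)).2 < w (phiAux a b (x, y)).1 := by
  by_cases c1 : y = a
  · have hxa : x < a := c1 ▸ hxy
    have e : phiAux a b (x, y) = (x, b) := by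
      unfold phiAux; rw [if_pos (show (x, y).2 = a from c1)]
    have hsy : Equiv.swap a b y = b := by rw [c1, Equiv.swap_apply_left]
    have hsx : Equiv.swap a b x = x :=
      Equiv.swap_apply_of_ne_of_ne (ne_of_lt hxa) (ne_of_lt (lt_trans hxa hab))
    rw [hsy, hsx] at hcond
    rw [e]
    exact ⟨fun hq => (ne_of_lt hxa) (congrArg Prod.fst hq), lt_trans hxa hab, hcond⟩
  · by_cases c2 : x = b
    · have hby : b < y := c2 ▸ hxy
      have e : phiAux a b (x, y) = (a, y) := by
        unfold phiAux
        rw [if_neg (show ¬((x, y).2 = a) from c1), if_pos (show (x, y).1 = b from c2)]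
      have hsx : Equiv.swap a b x = a := by rw [c2, Equiv.swap_apply_right]
      have hsy : Equiv.swap a b y = y :=
        Equiv.swap_apply_of_ne_of_ne (ne_of_gt (lt_trans hab hby)) (ne_of_gt hby)
      rw [hsy, hsx] at hcond
      rw [e]
      exact ⟨fun hq => (ne_of_gt hby) (congrArg Prod.snd hq), lt_trans hab hby, hcond⟩
    · by_cases c3 : y = b ∧ x < a
      · have e : phiAux a b (x, y) = (x, a) := by
          unfold phiAux
          rw [if_neg (show ¬((x, y).2 = a) from c1), if_neg (show ¬((x, y).1 = b) from c2),
              if_pos (show (x, y).2 = b ∧ (x, y).1 < a from c3)]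
        have hsy : Equiv.swap a b y = a := by rw [c3.1, Equiv.swap_apply_right]
        have hsx : Equiv.swap a b x = x :=
          Equiv.swap_apply_of_ne_of_ne (ne_of_lt c3.2) c2
        rw [hsy, hsx] at hcond
        rw [e]
        exact ⟨fun hq => (ne_of_lt hab) (congrArg Prod.snd hq), c3.2, hcond⟩
      · by_cases c4 : x = a ∧ b < y
        · have e : phiAux a b (x, y) = (b, y) := by
            unfold phiAux
            rw [if_neg (show ¬((x, y).2 = a) from c1), if_neg (show ¬((x, y).1 = b) from c2),
                if_neg (show ¬((x, y).2 = b ∧ (x, y).1 < a) from c3),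
                if_pos (show (x, y).1 = a ∧ b < (x, y).2 from c4)]
          have hsx : Equiv.swap a b x = b := by rw [c4.1, Equiv.swap_apply_left]
          have hsy : Equiv.swap a b y = y :=
            Equiv.swap_apply_of_ne_of_ne (ne_of_gt (lt_trans hab c4.2)) (ne_of_gt c4.2)
          rw [hsy, hsx] at hcond
          rw [e]
          exact ⟨fun hq => (ne_of_lt hab).symm (congrArg Prod.fst hq), c4.2, hcond⟩
        · have e : phiAux a b (x, y) = (x, y) := by
            unfold phiAux
            rw [if_neg (show ¬((x, y).2 = a) from c1), if_neg (show ¬((x, y).1 = b) from c2),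
                if_neg (show ¬((x, y).2 = b ∧ (x, y).1 < a) from c3),
                if_neg (show ¬((x, y).1 = a ∧ b < (x, y).2) from c4)]
          rw [e]
          by_cases hx : x = a
          · have hyb : ¬ b < y := fun h => c4 ⟨hx, h⟩
            by_cases hy : y = b
            · exfalso
              rw [hy, Equiv.swap_apply_right, hx, Equiv.swap_apply_left] at hcond
              exact absurd hcond (asymm hw)
            · have hylt : y < b := lt_of_le_of_ne (not_lt.mp hyb) hy
              have hsx : Equiv.swap a b x = b := by rw [hx, Equiv.swap_apply_left]
              have hsy : Equiv.swap a b y = y := Equiv.swap_apply_of_ne_of_ne c1 hy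
              rw [hsy, hsx] at hcond
              refine ⟨fun hq => hy (congrArg Prod.snd hq), hxy, ?_⟩
              rw [hx]
              exact lt_trans hcond hw
          · by_cases hy : y = b
            · have hax : a < x := by
                have h3 : ¬ x < a := fun h => c3 ⟨hy, h⟩
                exact lt_of_le_of_ne (not_lt.mp h3) (Ne.symm hx)
              have hsy : Equiv.swap a b y = a := by rw [hy, Equiv.swap_apply_right]
              have hsx : Equiv.swap a b x = x := Equiv.swap_apply_of_ne_of_ne hx c2
              rw [hsy, hsx] at hcond
              refine ⟨fun hq => hx (congrArg Prod.fst hq), hxy, ?_⟩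
              rw [hy]
              exact lt_trans hw hcond
            · have hsx : Equiv.swap a b x = x := Equiv.swap_apply_of_ne_of_ne hx c2
              have hsy : Equiv.swap a b y = y := Equiv.swap_apply_of_ne_of_ne c1 hy
              rw [hsy, hsx] at hcond
              exact ⟨fun hq => hx (congrArg Prod.fst hq), hxy, hcond⟩

section C
variable {r : ℕ}

lemma clen_inv (w : Equiv.Perm (Fin r)) : clen w⁻¹ = clen w := by
  unfold clen
  apply Finset.card_bij' (fun p _ => (w⁻¹ p.2, w⁻¹ p.1)) (fun p _ => (w p.2, w p.1))
  · intro p hp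
    simp only [Finset.mem_filter, Finset.mem_univ, true_and] at hp ⊢
    simp [hp.1, hp.2]
    exact hp.2
  · intro p hp
    simp only [Finset.mem_filter, Finset.mem_univ, true_and] at hp ⊢
    simp [hp.1, hp.2]
  · intro p hp; simp
  · intro p hp; simp

lemma clen_mul_swap (w : Equiv.Perm (Fin r)) (a b : Fin r) (hab : a < b) (hw : w b < w a) :
    clen (w * Equiv.swap a b) < clen w := by
  classical
  have hmem : (a, b) ∈ Finset.univ.filter (fun p : Fin r × Fin r => p.1 < p.2 ∧ w p.2 < w p.1) := by
    simp only [Finset.mem_filter, Finset.mem_univ, true_and]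
    exact ⟨hab, hw⟩
  have hcard : (Finset.univ.filter (fun p : Fin r × Fin r =>
        p.1 < p.2 ∧ (w * Equiv.swap a b) p.2 < (w * Equiv.swap a b) p.1)).card
      ≤ ((Finset.univ.filter (fun p : Fin r × Fin r => p.1 < p.2 ∧ w p.2 < w p.1)).erase (a, b)).card := by
    apply Finset.card_le_card_of_injOn (phiAux a b)
    · rintro ⟨x, y⟩ hp
      change (x, y) ∈ Finset.filter _ _ at hp
      obtain ⟨hxy, hcond⟩ := (Finset.mem_filter.mp hp).2
      have h := phi_maps w a b hab hw x y hxy hcond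
      change phiAux a b (x, y) ∈ Finset.erase _ _
      rw [Finset.mem_erase, Finset.mem_filter]
      simp only [Finset.mem_univ, true_and]
      exact ⟨h.1, h.2.1, h.2.2⟩
    · intro p hp q hq heq
      simp only [Finset.mem_coe, Finset.mem_filter, Finset.mem_univ, true_and] at hp hq
      have e1 := psi_phi a b hab p hp.1
      have e2 := psi_phi a b hab q hq.1
      rw [← e1, ← e2, heq]
  have h3 := Finset.card_erase_of_mem hmem
  have h2 : 1 ≤ (Finset.univ.filter (fun p : Fin r × Fin r => p.1 < p.2 ∧ w p.2 < w p.1)).card :=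
    Finset.card_pos.mpr ⟨_, hmem⟩
  unfold clen
  omega

lemma clen_swap_mul (w : Equiv.Perm (Fin r)) (a b : Fin r) (hab : a < b) (hw : w b < w a) :
    clen (Equiv.swap (w a) (w b) * w) < clen w := by
  have h1 : clen (w⁻¹ * Equiv.swap (w b) (w a)) < clen w⁻¹ := by
    apply clen_mul_swap w⁻¹ (w b) (w a) hw
    simp [hab]
  have h2 : Equiv.swap (w a) (w b) * w = (w⁻¹ * Equiv.swap (w b) (w a))⁻¹ := by
    rw [mul_inv_rev, inv_inv]
    congr 1
    rw [← Equiv.swap_inv (w b) (w a)]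
    simp [Equiv.swap_comm]
  rw [h2, clen_inv]
  calc clen (w⁻¹ * Equiv.swap (w b) (w a)) < clen w⁻¹ := h1
  _ = clen w := clen_inv w

end C

section Tx
variable {r N : ℕ}

lemma swap_mem_young (lam : Fin N → ℕ) {a b : Fin r} (h : blockOf lam a = blockOf lam b) :
    Equiv.swap a b ∈ young r lam := by
  show ∀ x : Fin r, blockOf lam (Equiv.swap a b x) = blockOf lam x
  intro x
  rcases eq_or_ne x a with rfl | hxa
  · rw [Equiv.swap_apply_left]; exact h.symm
  rcases eq_or_ne x b with rfl | hxb
  · rw [Equiv.swap_apply_right]; exact h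
  · rw [Equiv.swap_apply_of_ne_of_ne hxa hxb]

end Tx

lemma clen_eq_of_isDM {r N : ℕ} (M : Fin N → Fin N → ℕ) (hMr : ∑ i, ∑ j, M i j = r)
    (d : Equiv.Perm (Fin r)) (hd : isDM r M d) :
    clen d = ∑ p : Fin N × Fin N, ∑ q : Fin N × Fin N,
      if q.2 < p.2 ∧ p.1 < q.1 then M p.2 p.1 * M q.2 q.1 else 0 := by
  classical
  have hrlam : ptil (rowSums M) N = r := by
    rw [ptil_of_ge _ le_rfl, ← hMr]; rfl
  have hrmu : ptil (colSums M) N = r := by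
    rw [ptil_of_ge _ le_rfl, ← hMr]
    exact Finset.sum_comm.symm
  -- fiber cardinalities
  have hfib : ∀ i j : Fin N,
      (Finset.univ.filter (fun a : Fin r =>
        blockOf (colSums M) a = j.val ∧ blockOf (rowSums M) (d a) = i.val)).card = M i j := by
    intro i j
    have him : (Finset.univ.filter (fun a : Fin r =>
          blockOf (colSums M) a = j.val ∧ blockOf (rowSums M) (d a) = i.val)).image d
        = (blockSet r (rowSums M) (i.val + 1)) ∩ (blockSet r (colSums M) (j.val + 1)).image d := by
      ext y
      simp only [Finset.mem_image, Finset.mem_filter, Finset.mem_univ, true_and,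
        Finset.mem_inter, mem_blockSet_iff _ hrlam, mem_blockSet_iff _ hrmu]
      constructor
      · rintro ⟨a, ⟨hmu, hlam⟩, rfl⟩
        exact ⟨hlam, a, hmu, rfl⟩
      · rintro ⟨hy, a, hmu, rfl⟩
        exact ⟨a, ⟨hmu, hy⟩, rfl⟩
    calc (Finset.univ.filter (fun a : Fin r =>
          blockOf (colSums M) a = j.val ∧ blockOf (rowSums M) (d a) = i.val)).card
        = ((Finset.univ.filter (fun a : Fin r =>
          blockOf (colSums M) a = j.val ∧ blockOf (rowSums M) (d a) = i.val)).image d).card :=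
          (Finset.card_image_of_injective _ d.injective).symm
      _ = M i j := by rw [him]; exact hd.2 i j
  -- the inversion set equals the "block-inversion" set
  have hInvS : Finset.univ.filter (fun p : Fin r × Fin r => p.1 < p.2 ∧ d p.2 < d p.1)
      = Finset.univ.filter (fun p : Fin r × Fin r =>
          blockOf (colSums M) p.1 < blockOf (colSums M) p.2 ∧
          blockOf (rowSums M) (d p.2) < blockOf (rowSums M) (d p.1)) := by
    apply Finset.Subset.antisymm
    · intro p hp
      simp only [Finset.mem_filter, Finset.mem_univ, true_and] at hp ⊢
      obtain ⟨hlt, hdlt⟩ := hp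
      have hmu_le : blockOf (colSums M) p.1 ≤ blockOf (colSums M) p.2 :=
        blockOf_le_blockOf _ (le_of_lt hlt)
      have hlam_le : blockOf (rowSums M) (d p.2) ≤ blockOf (rowSums M) (d p.1) :=
        blockOf_le_blockOf _ (le_of_lt hdlt)
      rcases lt_or_eq_of_le hmu_le with h1 | h1
      · rcases lt_or_eq_of_le hlam_le with h2 | h2
        · exact ⟨h1, h2⟩
        · exfalso
          have hx : Equiv.swap (d p.1) (d p.2) ∈ young r (rowSums M) :=
            swap_mem_young _ h2.symm
          have hw' : Equiv.swap (d p.1) (d p.2) * d ∈ dcoset r (rowSums M) (colSums M) d :=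
            ⟨_, hx, 1, (young r (colSums M)).one_mem, by rw [mul_one]⟩
          have hmin := hd.1 _ hw'
          have hlt' := clen_swap_mul d p.1 p.2 hlt hdlt
          omega
      · exfalso
        have hy : Equiv.swap p.1 p.2 ∈ young r (colSums M) := swap_mem_young _ h1
        have hw' : d * Equiv.swap p.1 p.2 ∈ dcoset r (rowSums M) (colSums M) d :=
          ⟨1, (young r (rowSums M)).one_mem, _, hy, by rw [one_mul]⟩
        have hmin := hd.1 _ hw'
        have hlt' := clen_mul_swap d p.1 p.2 hlt hdlt
        omega
    · intro p hp
      simp only [Finset.mem_filter, Finset.mem_univ, true_and] at hp ⊢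
      obtain ⟨h1, h2⟩ := hp
      constructor
      · by_contra hc
        push_neg at hc
        have := blockOf_le_blockOf (colSums M) (show p.2.val ≤ p.1.val from hc)
        omega
      · by_contra hc
        push_neg at hc
        have := blockOf_le_blockOf (rowSums M) (show (d p.1).val ≤ (d p.2).val from hc)
        omega
  -- counting the block-inversion set
  have hblockmu : ∀ a : Fin r, blockOf (colSums M) a < N := blockOf_lt _ hrmu
  have hblocklam : ∀ a : Fin r, blockOf (rowSums M) a < N := blockOf_lt _ hrlam
  set G : Fin r → Fin N × Fin N := fun a =>
    (⟨blockOf (colSums M) a, hblockmu a⟩, ⟨blockOf (rowSums M) (d a), hblocklam (d a)⟩) with hG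
  set S := Finset.univ.filter (fun p : Fin r × Fin r =>
      blockOf (colSums M) p.1 < blockOf (colSums M) p.2 ∧
      blockOf (rowSums M) (d p.2) < blockOf (rowSums M) (d p.1)) with hS
  have hGfib : ∀ p : Fin N × Fin N,
      (Finset.univ.filter (fun a : Fin r => G a = p)).card = M p.2 p.1 := by
    intro p
    rw [← hfib p.2 p.1]
    congr 1
    apply Finset.filter_congr
    intro a _
    simp only [hG, Prod.ext_iff, Fin.ext_iff]
  have hcount : S.card = ∑ pq : (Fin N × Fin N) × (Fin N × Fin N),
      (S.filter (fun ab : Fin r × Fin r => (G ab.1, G ab.2) = pq)).card :=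
    Finset.card_eq_sum_card_fiberwise (fun x _ => Finset.mem_univ _)
  have hfiber : ∀ pq : (Fin N × Fin N) × (Fin N × Fin N),
      (S.filter (fun ab : Fin r × Fin r => (G ab.1, G ab.2) = pq)).card =
      if pq.2.2 < pq.1.2 ∧ pq.1.1 < pq.2.1 then M pq.1.2 pq.1.1 * M pq.2.2 pq.2.1 else 0 := by
    intro pq
    by_cases hc : pq.2.2 < pq.1.2 ∧ pq.1.1 < pq.2.1
    · rw [if_pos hc]
      have h1 : S.filter (fun ab : Fin r × Fin r => (G ab.1, G ab.2) = pq)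
          = Finset.univ.filter (fun ab : Fin r × Fin r => (G ab.1, G ab.2) = pq) := by
        ext ab
        simp only [hS, Finset.filter_filter, Finset.mem_filter, Finset.mem_univ, true_and]
        constructor
        · exact fun h => h.2
        · intro h
          refine ⟨?_, h⟩
          have e11 : blockOf (colSums M) ab.1 = pq.1.1.val := congrArg (fun z => z.1.1.val) h
          have e12 : blockOf (rowSums M) (d ab.1) = pq.1.2.val := congrArg (fun z => z.1.2.val) h
          have e21 : blockOf (colSums M) ab.2 = pq.2.1.val := congrArg (fun z => z.2.1.val) h
          have e22 : blockOf (rowSums M) (d ab.2) = pq.2.2.val := congrArg (fun z => z.2.2.val) h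
          rw [e11, e12, e21, e22]
          exact ⟨hc.2, hc.1⟩
      have h2 : Finset.univ.filter (fun ab : Fin r × Fin r => (G ab.1, G ab.2) = pq)
          = (Finset.univ.filter (fun a : Fin r => G a = pq.1)) ×ˢ
            (Finset.univ.filter (fun a : Fin r => G a = pq.2)) := by
        ext ab
        simp only [Finset.mem_filter, Finset.mem_univ, true_and, Finset.mem_product, Prod.ext_iff]
      rw [h1, h2, Finset.card_product, hGfib, hGfib]
    · rw [if_neg hc]
      rw [Finset.card_eq_zero, Finset.filter_eq_empty_iff]
      intro ab hab
      simp only [hS, Finset.mem_filter, Finset.mem_univ, true_and] at hab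
      intro h
      apply hc
      have e11 : blockOf (colSums M) ab.1 = pq.1.1.val := congrArg (fun z => z.1.1.val) h
      have e12 : blockOf (rowSums M) (d ab.1) = pq.1.2.val := congrArg (fun z => z.1.2.val) h
      have e21 : blockOf (colSums M) ab.2 = pq.2.1.val := congrArg (fun z => z.2.1.val) h
      have e22 : blockOf (rowSums M) (d ab.2) = pq.2.2.val := congrArg (fun z => z.2.2.val) h
      constructor
      · show pq.2.2.val < pq.1.2.val
        omega
      · show pq.1.1.val < pq.2.1.val
        omega
  have : clen d = S.card := by
    unfold clen
    rw [hInvS, hS]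
  rw [this, hcount, Finset.sum_congr rfl (fun pq _ => hfiber pq)]
  rw [Fintype.sum_prod_type]


def chiF {N : ℕ} : (Fin N × Fin N) → (Fin N × Fin N) → ℤ := fun p q =>
  if q.2 < p.2 ∧ p.1 < q.1 then 1 else 0

def deltaF {N : ℕ} (u v : Fin N × Fin N) : (Fin N × Fin N) → ℤ := fun p =>
  (if p = u then 1 else 0) - (if p = v then 1 else 0)

lemma sum_mul_deltas {α : Type*} [Fintype α] [DecidableEq α] (u v : α) (g : α → ℤ) :
    ∑ p, g p * ((if p = u then (1:ℤ) else 0) - (if p = v then 1 else 0)) = g u - g v := by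
  have e : ∀ p, g p * ((if p = u then (1:ℤ) else 0) - (if p = v then 1 else 0))
      = (if p = u then g p else 0) - (if p = v then g p else 0) := by
    intro p; split_ifs <;> ring
  rw [Finset.sum_congr rfl fun p _ => e p, Finset.sum_sub_distrib,
      Finset.sum_ite_eq' Finset.univ u g, Finset.sum_ite_eq' Finset.univ v g]
  simp

lemma sum_deltas_mul {N : ℕ} (u v : Fin N × Fin N) (g : (Fin N × Fin N) → ℤ) :
    ∑ p, g p * deltaF u v p = g u - g v := by
  simpa [deltaF] using sum_mul_deltas u v g

lemma quad_diff {N : ℕ} (χ : (Fin N × Fin N) → (Fin N × Fin N) → ℤ) (A : (Fin N × Fin N) → ℤ)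
    (u v : Fin N × Fin N)
    (h1 : χ u u = 0) (h2 : χ u v = 0) (h3 : χ v u = 0) (h4 : χ v v = 0) :
    ∑ p, ∑ q, χ p q * ((A p + deltaF u v p) * (A q + deltaF u v q))
      = (∑ p, ∑ q, χ p q * (A p * A q))
        + ∑ p, A p * ((χ p u - χ p v) + (χ u p - χ v p)) := by
  have e1 : ∀ p, ∑ q, χ p q * ((A p + deltaF u v p) * (A q + deltaF u v q))
      = (∑ q, χ p q * (A p * A q))
        + ((χ p u * A p - χ p v * A p)
          + (deltaF u v p * (∑ q, χ p q * A q) + (χ p u * deltaF u v p - χ p v * deltaF u v p))) := by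
    intro p
    have e : ∀ q, χ p q * ((A p + deltaF u v p) * (A q + deltaF u v q))
        = χ p q * (A p * A q) + ((χ p q * A p) * deltaF u v q
          + (deltaF u v p * (χ p q * A q) + (χ p q * deltaF u v p) * deltaF u v q)) := fun q => by ring
    rw [Finset.sum_congr rfl fun q _ => e q]
    simp only [Finset.sum_add_distrib]
    have hA1 : (∑ q, (χ p q * A p) * deltaF u v q) = χ p u * A p - χ p v * A p := by
      simpa using sum_deltas_mul u v (fun q => χ p q * A p)
    have hA2 : (∑ q, (χ p q * deltaF u v p) * deltaF u v q)
        = χ p u * deltaF u v p - χ p v * deltaF u v p := by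
      simpa using sum_deltas_mul u v (fun q => χ p q * deltaF u v p)
    rw [hA1, hA2, ← Finset.mul_sum]
  rw [Finset.sum_congr rfl fun p _ => e1 p]
  simp only [Finset.sum_add_distrib]
  congr 1
  have f1 : ∑ p, deltaF u v p * (∑ q, χ p q * A q)
      = (∑ q, χ u q * A q) - (∑ q, χ v q * A q) := by
    have e : ∀ p, deltaF u v p * (∑ q, χ p q * A q) = (∑ q, χ p q * A q) * deltaF u v p :=
      fun p => by ring
    rw [Finset.sum_congr rfl fun p _ => e p]
    simpa using sum_deltas_mul u v (fun p => ∑ q, χ p q * A q)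
  have f2 : ∑ p, (χ p u * deltaF u v p - χ p v * deltaF u v p) = 0 := by
    have e : ∀ p, (χ p u * deltaF u v p - χ p v * deltaF u v p)
        = (χ p u - χ p v) * deltaF u v p := fun p => by ring
    rw [Finset.sum_congr rfl fun p _ => e p]
    have := sum_deltas_mul u v (fun p => χ p u - χ p v)
    rw [this, h1, h2, h3, h4]
    ring
  have f3 : ∑ p, A p * ((χ p u - χ p v) + (χ u p - χ v p))
      = (∑ p, (χ p u * A p - χ p v * A p)) + ((∑ p, χ u p * A p) - (∑ p, χ v p * A p)) := by
    rw [← Finset.sum_sub_distrib, ← Finset.sum_add_distrib]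
    exact Finset.sum_congr rfl fun p _ => by ring
  rw [f1, f2, f3]
  ring

lemma cast_clen_sum {N : ℕ} (F : Fin N → Fin N → ℕ) (n : ℕ)
    (hn : n = ∑ p : Fin N × Fin N, ∑ q : Fin N × Fin N,
      if q.2 < p.2 ∧ p.1 < q.1 then F p.2 p.1 * F q.2 q.1 else 0) :
    (n : ℤ) = ∑ p : Fin N × Fin N, ∑ q : Fin N × Fin N,
      chiF p q * ((F p.2 p.1 : ℤ) * (F q.2 q.1 : ℤ)) := by
  subst hn
  rw [Nat.cast_sum]
  refine Finset.sum_congr rfl fun p _ => ?_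
  rw [Nat.cast_sum]
  refine Finset.sum_congr rfl fun q _ => ?_
  unfold chiF
  split_ifs <;> push_cast <;> ring

lemma prod_sum_swap {N : ℕ} (F : Fin N → Fin N → ℤ) :
    (∑ p : Fin N × Fin N, F p.2 p.1) = ∑ i, ∑ j, F i j := by
  rw [Fintype.sum_prod_type (f := fun p : Fin N × Fin N => F p.2 p.1)]
  exact Finset.sum_comm


/-- Lemma `d_M`, length formula.  Here `h` is 0-based (rows `h`, `h+1`)
and `k : Fin N` is 0-based.  If `m_{h+1,k} ≥ 1` then
`ℓ(d_{M⁺_{h,k}}) = ℓ(d_M) + Σ_{j<k} m_{h+1,j} - Σ_{j>k} m_{h,j}` (an identity in `ℤ`). -/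
theorem stmt11 (N r : ℕ) (hN : 2 ≤ N) (M : Fin N → Fin N → ℕ)
    (hMr : ∑ i, ∑ j, M i j = r)
    (h : ℕ) (hh : h + 1 < N) (k : Fin N) (hk : 1 ≤ M ⟨h + 1, hh⟩ k)
    (MP : Fin N → Fin N → ℕ)
    (hMPdef : ∀ i j : Fin N, MP i j =
      if i.val = h ∧ j = k then M i j + 1
      else if i.val = h + 1 ∧ j = k then M i j - 1 else M i j)
    (dM dP : Equiv.Perm (Fin r)) (hdM : isDM r M dM) (hdP : isDM r MP dP) :
    (clen dP : ℤ) = (clen dM : ℤ)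
      + ∑ j : Fin N, (if j.val < k.val then (M ⟨h + 1, hh⟩ j : ℤ) else 0)
      - ∑ j : Fin N, (if k.val < j.val then (M ⟨h, by omega⟩ j : ℤ) else 0) := by
  classical
  have hhN : h < N := Nat.lt_of_succ_lt hh
  set h0 : Fin N := ⟨h, hhN⟩ with hh0
  set h1 : Fin N := ⟨h + 1, hh⟩ with hh1
  set u : Fin N × Fin N := (k, h0) with hu
  set v : Fin N × Fin N := (k, h1) with hv
  -- pointwise description of MP over ℤ
  have hBD : ∀ p : Fin N × Fin N, (MP p.2 p.1 : ℤ) = (M p.2 p.1 : ℤ) + deltaF u v p := by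
    intro p
    rw [hMPdef p.2 p.1]
    unfold deltaF
    by_cases c1 : p.2.val = h ∧ p.1 = k
    · have hpu : p = u := by
        rw [hu]
        exact Prod.ext c1.2 (Fin.ext c1.1)
      have hpv : p ≠ v := by
        intro he
        have : p.2.val = h + 1 := congrArg (fun z => z.2.val) (he.trans hv)
        omega
      rw [if_pos c1, if_pos hpu, if_neg hpv]
      push_cast
      ring
    · by_cases c2 : p.2.val = h + 1 ∧ p.1 = k
      · have hpv : p = v := by
          rw [hv]
          exact Prod.ext c2.2 (Fin.ext c2.1)
        have hpu : p ≠ u := by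
          intro he
          have : p.2.val = h := congrArg (fun z => z.2.val) (he.trans hu)
          omega
        have hge : 1 ≤ M p.2 p.1 := by
          have e2 : p.2 = h1 := Fin.ext c2.1
          rw [e2, c2.2]
          exact hk
        rw [if_neg c1, if_pos c2, if_neg hpu, if_pos hpv]
        rw [Nat.cast_sub hge]
        push_cast
        ring
      · have hpu : p ≠ u := by
          intro he
          exact c1 ⟨congrArg (fun z => z.2.val) (he.trans hu),
            congrArg Prod.fst (he.trans hu)⟩
        have hpv : p ≠ v := by
          intro he
          exact c2 ⟨congrArg (fun z => z.2.val) (he.trans hv),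
            congrArg Prod.fst (he.trans hv)⟩
        rw [if_neg c1, if_neg c2, if_neg hpu, if_neg hpv]
        ring
  -- MP has total sum r
  have hMPr : ∑ i, ∑ j, MP i j = r := by
    have hz : ((∑ i, ∑ j, MP i j : ℕ) : ℤ) = ((∑ i, ∑ j, M i j : ℕ) : ℤ) := by
      push_cast
      rw [← prod_sum_swap (fun i j => (MP i j : ℤ)), ← prod_sum_swap (fun i j => (M i j : ℤ))]
      rw [Finset.sum_congr rfl fun p _ => hBD p, Finset.sum_add_distrib]
      have : ∑ p : Fin N × Fin N, deltaF u v p = 0 := by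
        have := sum_deltas_mul u v (fun _ => (1 : ℤ))
        simp only [one_mul] at this
        rw [this]; ring
      rw [this, add_zero]
    have : (∑ i, ∑ j, MP i j) = ∑ i, ∑ j, M i j := by exact_mod_cast hz
    rw [this, hMr]
  have e1 := clen_eq_of_isDM M hMr dM hdM
  have e2 := clen_eq_of_isDM MP hMPr dP hdP
  have ce1 := cast_clen_sum M (clen dM) e1
  have ce2 := cast_clen_sum MP (clen dP) e2
  -- χ vanishes on u, v pairs
  have z1 : chiF u u = 0 := by
    unfold chiF
    rw [if_neg]
    rintro ⟨hlt, -⟩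
    exact lt_irrefl _ hlt
  have z2 : chiF u v = 0 := by
    unfold chiF
    rw [if_neg]
    rintro ⟨hlt, -⟩
    rw [hu, hv] at hlt
    have : h + 1 < h := hlt
    omega
  have z3 : chiF v u = 0 := by
    unfold chiF
    rw [if_neg]
    rintro ⟨-, hlt⟩
    rw [hu, hv] at hlt
    exact lt_irrefl _ hlt
  have z4 : chiF v v = 0 := by
    unfold chiF
    rw [if_neg]
    rintro ⟨hlt, -⟩
    exact lt_irrefl _ hlt
  -- main expansion
  have main : (clen dP : ℤ) = (clen dM : ℤ)
      + ∑ p : Fin N × Fin N, (M p.2 p.1 : ℤ)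
          * ((chiF p u - chiF p v) + (chiF u p - chiF v p)) := by
    rw [ce2, ce1]
    rw [Finset.sum_congr rfl fun p _ => Finset.sum_congr rfl fun q _ => by rw [hBD p, hBD q]]
    exact quad_diff chiF (fun p => (M p.2 p.1 : ℤ)) u v z1 z2 z3 z4
  -- evaluate the correction term
  have hpt : ∀ p : Fin N × Fin N,
      (M p.2 p.1 : ℤ) * ((chiF p u - chiF p v) + (chiF u p - chiF v p))
      = (if p.2 = h1 ∧ p.1.val < k.val then (M p.2 p.1 : ℤ) else 0)
        - (if p.2 = h0 ∧ k.val < p.1.val then (M p.2 p.1 : ℤ) else 0) := by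
    intro p
    have hs : ((chiF p u - chiF p v) + (chiF u p - chiF v p))
        = (if p.2 = h1 ∧ p.1.val < k.val then (1:ℤ) else 0)
          - (if p.2 = h0 ∧ k.val < p.1.val then (1:ℤ) else 0) := by
      unfold chiF
      rw [hu, hv, hh0, hh1]
      simp only [Fin.lt_def, Fin.ext_iff]
      split_ifs <;> omega
    rw [hs]
    split_ifs <;> ring
  have hcorr : ∑ p : Fin N × Fin N, (M p.2 p.1 : ℤ)
        * ((chiF p u - chiF p v) + (chiF u p - chiF v p))
      = (∑ j : Fin N, (if j.val < k.val then (M h1 j : ℤ) else 0))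
        - ∑ j : Fin N, (if k.val < j.val then (M h0 j : ℤ) else 0) := by
    rw [Finset.sum_congr rfl fun p _ => hpt p, Finset.sum_sub_distrib]
    congr 1
    · rw [Fintype.sum_prod_type (f := fun p : Fin N × Fin N =>
        if p.2 = h1 ∧ p.1.val < k.val then (M p.2 p.1 : ℤ) else 0)]
      refine Finset.sum_congr rfl fun j _ => ?_
      have e : ∀ i : Fin N, (if i = h1 ∧ j.val < k.val then (M i j : ℤ) else 0)
          = if i = h1 then (if j.val < k.val then (M i j : ℤ) else 0) else 0 := by
        intro i
        by_cases hi : i = h1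
        · by_cases hj : j.val < k.val <;> simp [hi, hj]
        · simp [hi]
      rw [Finset.sum_congr rfl fun i _ => e i,
        Finset.sum_ite_eq' Finset.univ h1 (fun i => if j.val < k.val then (M i j : ℤ) else 0)]
      simp
    · rw [Fintype.sum_prod_type (f := fun p : Fin N × Fin N =>
        if p.2 = h0 ∧ k.val < p.1.val then (M p.2 p.1 : ℤ) else 0)]
      refine Finset.sum_congr rfl fun j _ => ?_
      have e : ∀ i : Fin N, (if i = h0 ∧ k.val < j.val then (M i j : ℤ) else 0)
          = if i = h0 then (if k.val < j.val then (M i j : ℤ) else 0) else 0 := by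
        intro i
        by_cases hi : i = h0
        · by_cases hj : k.val < j.val <;> simp [hi, hj]
        · simp [hi]
      rw [Finset.sum_congr rfl fun i _ => e i,
        Finset.sum_ite_eq' Finset.univ h0 (fun i => if k.val < j.val then (M i j : ℤ) else 0)]
      simp
  rw [main, hcorr]
  ring
end

section
/- Let N ≥ 2, M = (m_{i,j}) ∈ M(N,r), and fix 1 ≤ j ≤ N−1 and 2 ≤ h ≤ N. Then the partial column product w_{2,j} w_{3,j} ⋯ w_{h,j} fixes every element of {1,…,r} that is greater than σ_{h−1,j} + m_{h,j}. -/
open Equiv Finset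

lemma prod_fix_of_forall {r : ℕ} (l : List (Equiv.Perm (Fin r))) (x : Fin r)
    (h : ∀ w ∈ l, w x = x) : l.prod x = x := by
  induction l with
  | nil => simp
  | cons a l ih =>
      simp only [List.prod_cons, Equiv.Perm.mul_apply]
      rw [ih (fun w hw => h w (List.mem_cons_of_mem _ hw)), h a List.mem_cons_self]

lemma sT_fix {r : ℕ} (k : ℕ) (x : Fin r) (hk : k < x.val) : sT r k x = x := by
  unfold sT
  split
  · exact Equiv.swap_apply_of_ne_of_ne (Fin.ne_of_val_ne (show x.val ≠ k - 1 by omega))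
      (Fin.ne_of_val_ne (show x.val ≠ k by omega))
  · rfl

lemma descProd_fix {r : ℕ} (b n : ℕ) (x : Fin r) (hb : b < x.val) : descProd r b n x = x := by
  apply prod_fix_of_forall
  intro w hw
  obtain ⟨t, _, rfl⟩ := List.mem_map.1 hw
  exact sT_fix _ _ (by omega)

lemma wE_fix {r N : ℕ} (M : Fin N → Fin N → ℕ) (i j : ℕ) (x : Fin r)
    (hx : sigmaS M (i - 1) j + ent M i j ≤ x.val) : wE r M i j x = x := by
  apply prod_fix_of_forall
  intro w hw
  obtain ⟨t, ht, rfl⟩ := List.mem_map.1 hw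
  rw [List.mem_range] at ht
  exact descProd_fix _ _ _ (by omega)

lemma sigmaS_mono {N : ℕ} (M : Fin N → Fin N → ℕ) {i i' : ℕ} (j : ℕ) (hii' : i ≤ i') :
    sigmaS M i j ≤ sigmaS M i' j := by
  unfold sigmaS
  refine Nat.add_le_add_left (Finset.sum_le_sum fun p _ => ?_) _
  split_ifs with h1 h2
  · exact le_refl _
  · exact absurd ⟨h1.1.trans hii', h1.2⟩ h2
  · exact Nat.zero_le _
  · exact le_refl _

lemma sigmaS_step {N : ℕ} (M : Fin N → Fin N → ℕ) {i j : ℕ}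
    (hi1 : 1 ≤ i) (hiN : i ≤ N) (hj1 : 1 ≤ j) (hjN : j ≤ N) :
    sigmaS M (i - 1) j + ent M i j ≤ sigmaS M i j := by
  have hent : ent M i j = M ⟨i - 1, by omega⟩ ⟨j - 1, by omega⟩ := by
    unfold ent
    rw [dif_pos ⟨hi1, hiN, hj1, hjN⟩]
  set c : Fin N × Fin N := (⟨i - 1, by omega⟩, ⟨j - 1, by omega⟩) with hc
  have hsum : ent M i j = ∑ p : Fin N × Fin N, if p = c then M p.1 p.2 else 0 := by
    rw [Finset.sum_ite_eq' Finset.univ c (fun p => M p.1 p.2), if_pos (Finset.mem_univ c)]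
    exact hent
  unfold sigmaS
  rw [add_assoc]
  refine Nat.add_le_add_left ?_ _
  rw [hsum, ← Finset.sum_add_distrib]
  refine Finset.sum_le_sum fun p _ => ?_
  by_cases hp : p = c
  · subst hp
    rw [if_pos rfl, if_neg (show ¬(i - 1 + 1 ≤ i - 1 ∧ j ≤ j - 1 + 1) by omega),
      if_pos (show i - 1 + 1 ≤ i ∧ j ≤ j - 1 + 1 by omega)]
    omega
  · rw [if_neg hp, add_zero]
    split_ifs with h1 h2
    · exact le_refl _
    · exact absurd ⟨by omega, h1.2⟩ h2
    · exact Nat.zero_le _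
    · exact le_refl _

/-- Remark `dmw`(2), last assertion.  For `1 ≤ j ≤ N-1` and
`2 ≤ h ≤ N` (1-based), the partial column product `w_{2,j} w_{3,j} ⋯ w_{h,j}` fixes every
point whose label exceeds `σ_{h-1,j} + m_{h,j}`. -/
theorem stmt16 (N r : ℕ) (hN : 2 ≤ N) (M : Fin N → Fin N → ℕ)
    (hMr : ∑ i, ∑ j, M i j = r)
    (j h : ℕ) (hj1 : 1 ≤ j) (hjN : j ≤ N - 1) (hh2 : 2 ≤ h) (hhN : h ≤ N) :
    ∀ x : Fin r, sigmaS M (h - 1) j + ent M h j < x.val + 1 →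
      (((List.range (h - 1)).map (fun t => wE r M (t + 2) j)).prod) x = x := by
  intro x hx
  apply prod_fix_of_forall
  intro w hw
  obtain ⟨t, ht, rfl⟩ := List.mem_map.1 hw
  rw [List.mem_range] at ht
  apply wE_fix
  show sigmaS M (t + 1) j + ent M (t + 2) j ≤ x.val
  rcases eq_or_lt_of_le (show t + 2 ≤ h by omega) with heq | hlt
  · have : t + 1 = h - 1 := by omega
    rw [this, heq]; omega
  · have h1 : sigmaS M (t + 1) j + ent M (t + 2) j ≤ sigmaS M (t + 2) j :=
      sigmaS_step (i := t + 2) M (by omega) (by omega) hj1 (by omega)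
    have h2 : sigmaS M (t + 2) j ≤ sigmaS M (h - 1) j := sigmaS_mono M j (by omega)
    omega
end
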